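/- arXiv:1310.5014 — 9 statements merged into one kernel-verified Lean document; each statement's English description precedes it below -/
import Mathlib

section
/- Let H be a complex Hilbert space and A ⊆ H ⊕ H a monotone relation, i.e. for all (u,v),(x,y) ∈ A one has Re⟨u−x, v−y⟩ ≥ 0. Then A is maximal monotone (has no proper monotone extension) if and only if for every λ > 0 the relation 1 + λA is onto, i.e. {x + λy : (x,y) ∈ A} = H, and this in turn is equivalent to the existence of some λ > 0 for which 1 + λA is onto. -/
open scoped RealInnerProductSpace

section MintyCore
variable {E : Type*} [NormedAddCommGroup E] [InnerProductSpace ℝ E]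

noncomputable def q (p : E × E) (z : E) : ℝ := ⟪z - p.1, z + p.2⟫

lemma q_midpoint (p : E × E) (x y : E) :
    q p ((1/2 : ℝ) • (x + y)) = q p x / 2 + q p y / 2 - ‖x - y‖^2 / 4 := by
  simp only [q, ← real_inner_self_eq_norm_sq, inner_add_left, inner_add_right,
    inner_sub_left, inner_sub_right, real_inner_smul_left, real_inner_smul_right]
  rw [real_inner_comm y x, real_inner_comm x p.1, real_inner_comm y p.1]
  ring

lemma q_lower (p : E × E) (z : E) : -(‖p.1 + p.2‖^2/4) ≤ q p z := by
  have h : q p z + ‖p.1 + p.2‖^2/4 = ‖z + (1/2 : ℝ) • (p.2 - p.1)‖^2 := by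
    simp only [q, ← real_inner_self_eq_norm_sq, inner_add_left, inner_add_right,
      inner_sub_left, inner_sub_right, real_inner_smul_left, real_inner_smul_right]
    rw [real_inner_comm z p.1, real_inner_comm p.2 p.1, real_inner_comm z p.2,
      real_inner_comm (p.2) z]
    ring
  nlinarith [sq_nonneg ‖z + (1/2 : ℝ) • (p.2 - p.1)‖]

lemma q_add (p : E × E) (z d : E) :
    q p (z + d) = q p z + ⟪d, (z - p.1) + (z + p.2)⟫ + ‖d‖^2 := by
  simp only [q, inner_add_left, inner_add_right, inner_sub_left, inner_sub_right,
    real_inner_self_eq_norm_sq]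
  rw [real_inner_comm d z, real_inner_comm d p.1]
  ring

lemma q_cont (p : E × E) : Continuous (q p) := by
  unfold q
  exact (continuous_id.sub continuous_const).inner (continuous_id.add continuous_const)

noncomputable def g (F : Finset (E × E)) (hF : F.Nonempty) (z : E) : ℝ :=
  F.sup' hF (fun p => q p z)

lemma le_g {F : Finset (E × E)} (hF : F.Nonempty) {p : E × E} (hp : p ∈ F) (z : E) :
    q p z ≤ g F hF z := Finset.le_sup' (fun p => q p z) hp

lemma g_le {F : Finset (E × E)} (hF : F.Nonempty) {z : E} {c : ℝ}
    (h : ∀ p ∈ F, q p z ≤ c) : g F hF z ≤ c := Finset.sup'_le _ _ h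

lemma g_midpoint (F : Finset (E × E)) (hF : F.Nonempty) (x y : E) :
    g F hF ((1/2 : ℝ) • (x + y)) ≤ g F hF x / 2 + g F hF y / 2 - ‖x - y‖^2/4 := by
  refine g_le hF fun p hp => ?_
  rw [q_midpoint]
  have h1 := le_g hF hp x
  have h2 := le_g hF hp y
  linarith

lemma exists_min [CompleteSpace E] (F : Finset (E × E)) (hF : F.Nonempty) :
    ∃ z0 : E, ∀ z, g F hF z0 + ‖z - z0‖^2/2 ≤ g F hF z := by
  obtain ⟨p0, hp0⟩ := id hF
  have hbdd : BddBelow (Set.range (g F hF)) := by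
    refine ⟨-(‖p0.1 + p0.2‖^2/4), ?_⟩
    rintro x ⟨z, rfl⟩
    exact le_trans (q_lower p0 z) (le_g _ hp0 z)
  have hne : (Set.range (g F hF)).Nonempty := ⟨_, ⟨0, rfl⟩⟩
  set m := sInf (Set.range (g F hF)) with hm
  have hmle : ∀ z, m ≤ g F hF z := fun z => csInf_le hbdd ⟨z, rfl⟩
  have approx : ∀ n : ℕ, ∃ z : E, g F hF z < m + 1/(n+1) := by
    intro n
    have : m < m + 1/(n+1) := by
      have : (0:ℝ) < 1/(n+1) := by positivity
      linarith
    obtain ⟨a, ⟨z, rfl⟩, ha⟩ := exists_lt_of_csInf_lt hne this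
    exact ⟨z, ha⟩
  choose u hu using approx
  have key : ∀ n k : ℕ, ‖u n - u k‖^2 ≤ 2*(1/(n+1) + 1/(k+1)) := by
    intro n k
    have h1 := hmle ((1/2 : ℝ) • (u n + u k))
    have h2 := g_midpoint F ⟨p0, hp0⟩ (u n) (u k)
    have h3 := hu n
    have h4 := hu k
    nlinarith
  have hcauchy : CauchySeq u := by
    rw [Metric.cauchySeq_iff']
    intro ε hε
    obtain ⟨N, hN⟩ := exists_nat_gt (4/ε^2)
    refine ⟨N, fun n hn => ?_⟩
    have h1 := key n N
    have h2 : (1:ℝ)/(n+1) ≤ 1/(N+1) := by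
      apply one_div_le_one_div_of_le
      · positivity
      · exact_mod_cast Nat.succ_le_succ hn
    have h3 : (0:ℝ) < N + 1 := by positivity
    have h4 : 4/ε^2 < N := hN
    have h5 : ‖u n - u N‖^2 < ε^2 := by
      have h6 : 4*((1:ℝ)/(N+1)) < ε^2 := by
        rw [mul_one_div, div_lt_iff₀ h3]
        have hε2 : (0:ℝ) < ε^2 := by positivity
        calc (4:ℝ) = 4/ε^2 * ε^2 := by field_simp
        _ < N * ε^2 := by exact mul_lt_mul_of_pos_right h4 hε2
        _ ≤ ε^2 * (N+1) := by nlinarith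
      nlinarith
    have : dist (u n) (u N) = ‖u n - u N‖ := by rw [dist_eq_norm]
    rw [this]
    nlinarith [norm_nonneg (u n - u N)]
  obtain ⟨z0, hz0⟩ := cauchySeq_tendsto_of_complete hcauchy
  have hq0 : ∀ p ∈ F, q p z0 ≤ m := by
    intro p hp
    have ht1 : Filter.Tendsto (fun n => q p (u n)) Filter.atTop (nhds (q p z0)) :=
      ((q_cont p).continuousAt.tendsto.comp hz0)
    have ht2 : Filter.Tendsto (fun n : ℕ => m + 1/(n+1 : ℝ)) Filter.atTop (nhds m) := by
      have := tendsto_one_div_add_atTop_nhds_zero_nat (𝕜 := ℝ)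
      have h := Filter.Tendsto.add
        (tendsto_const_nhds : Filter.Tendsto (fun _ : ℕ => m) Filter.atTop (nhds m)) this
      simpa using h
    refine le_of_tendsto_of_tendsto' ht1 ht2 fun n => ?_
    exact le_of_lt (lt_of_le_of_lt (le_g hF hp (u n)) (hu n))
  have hgz0 : g F hF z0 = m := le_antisymm (g_le hF hq0) (hmle z0)
  refine ⟨z0, fun z => ?_⟩
  have h1 := hmle ((1/2 : ℝ) • (z0 + z))
  have h2 := g_midpoint F hF z0 z
  have h3 : ‖z - z0‖ = ‖z0 - z‖ := norm_sub_rev _ _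
  rw [hgz0] at h2
  rw [h3]
  linarith


set_option maxHeartbeats 1600000 in
lemma min_nonpos [CompleteSpace E] (F : Finset (E × E)) (hF : F.Nonempty)
    (hmono : ∀ p ∈ F, ∀ r ∈ F, 0 ≤ ⟪p.1 - r.1, p.2 - r.2⟫)
    (z0 : E) (hmin : ∀ z, g F hF z0 ≤ g F hF z) : g F hF z0 ≤ 0 := by
  classical
  set m := g F hF z0 with hm
  set f : E × E → E := fun p => (z0 - p.1) + (z0 + p.2) with hf
  set Ta : Set (E × E) := {p | p ∈ F ∧ q p z0 = m} with hTa
  set S : Set E := f '' Ta with hS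
  have hSfin : S.Finite := (F.finite_toSet.subset (fun p hp => hp.1)).image f
  obtain ⟨pm, hpm, hpmq⟩ := Finset.exists_mem_eq_sup' hF (fun p => q p z0)
  have hSne : S.Nonempty := ⟨f pm, pm, ⟨hpm, hpmq.symm⟩, rfl⟩
  -- Step 1: 0 ∈ convexHull ℝ S
  have hz : (0:E) ∈ convexHull ℝ S := by
    by_contra hc
    set C := convexHull ℝ S with hC
    have hCconv : Convex ℝ C := convex_convexHull ℝ S
    have hCcomp : IsComplete C :=
      ((hSfin.isCompact_convexHull (𝕜 := ℝ)).isClosed).isComplete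
    have hCne : C.Nonempty := hSne.mono (subset_convexHull ℝ S)
    obtain ⟨v, hvC, hvmin⟩ := exists_norm_eq_iInf_of_complete_convex hCne hCcomp hCconv (0:E)
    have hchar := (norm_eq_iInf_iff_real_inner_le_zero hCconv hvC).1 hvmin
    have hv0 : v ≠ 0 := fun h => hc (h ▸ hvC)
    have hvpos : 0 < ‖v‖^2 := by
      have := norm_pos_iff.mpr hv0
      positivity
    have hkey : ∀ w ∈ C, ‖v‖^2 ≤ ⟪v, w⟫ := by
      intro w hw
      have := hchar w hw
      simp only [zero_sub, inner_sub_right, inner_neg_left] at this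
      have hvv : ⟪v, v⟫ = ‖v‖^2 := real_inner_self_eq_norm_sq v
      linarith
    -- points moved in direction -v must keep the sup ≥ m
    have hstep : ∀ n : ℕ, ∃ p, p ∈ F ∧
        m ≤ q p z0 + (1/(n+1) : ℝ) * -⟪v, f p⟫ + (1/(n+1) : ℝ)^2 * ‖v‖^2 := by
      intro n
      obtain ⟨p, hp, hpq⟩ :=
        Finset.exists_mem_eq_sup' hF (fun p => q p (z0 + (-(1/(n+1) : ℝ)) • v))
      refine ⟨p, hp, ?_⟩
      have h1 : m ≤ q p (z0 + (-(1/(n+1) : ℝ)) • v) := hpq ▸ hmin _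
      rw [q_add] at h1
      have h2 : ⟪(-(1/(n+1) : ℝ)) • v, (z0 - p.1) + (z0 + p.2)⟫
          = (1/(n+1) : ℝ) * -⟪v, f p⟫ := by
        rw [real_inner_smul_left]; ring
      have h3 : ‖(-(1/(n+1) : ℝ)) • v‖^2 = (1/(n+1) : ℝ)^2 * ‖v‖^2 := by
        rw [norm_smul]; simp [mul_pow]
      rw [h2, h3] at h1
      exact h1
    choose ps hps hpsq using hstep
    -- pigeonhole: some p occurs infinitely often
    obtain ⟨⟨p, hpF⟩, hfib0⟩ :=
      Finite.exists_infinite_fiber (fun n => (⟨ps n, hps n⟩ : {x // x ∈ F}))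
    have hfib : ((fun n => (⟨ps n, hps n⟩ : {x // x ∈ F})) ⁻¹' {⟨p, hpF⟩}).Infinite :=
      Set.infinite_coe_iff.mp hfib0
    have hfib' : {n : ℕ | ps n = p}.Infinite := by
      refine hfib.mono ?_
      intro n hn
      simpa using congrArg Subtype.val (hn : _ = _)
    have hsmall : ∀ δ : ℝ, 0 < δ → ∃ n : ℕ, ps n = p ∧ (1/(n+1) : ℝ) < δ := by
      intro δ hδ
      obtain ⟨N, hN⟩ := exists_nat_gt (1/δ)
      have : ∃ n ∈ {n : ℕ | ps n = p}, N < n := by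
        by_contra hcon
        push_neg at hcon
        exact hfib' (Set.Finite.subset (Set.finite_Iic N) (fun n hn => hcon n hn))
      obtain ⟨n, hn, hNn⟩ := this
      refine ⟨n, hn, ?_⟩
      rw [div_lt_iff₀ (by positivity)]
      have h1 : 1/δ < n := lt_trans hN (by exact_mod_cast hNn)
      rw [div_lt_iff₀ hδ] at h1
      nlinarith [hδ]
    -- p is active
    have hqp : q p z0 ≤ m := le_g hF hpF z0
    have hmqp : m ≤ q p z0 := by
      by_contra hlt
      push_neg at hlt
      set δ := (m - q p z0) / (|⟪v, f p⟫| + ‖v‖^2 + 1) with hδdef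
      have hδpos : 0 < δ := by
        apply div_pos (by linarith)
        positivity
      obtain ⟨n, hn, hnδ⟩ := hsmall δ hδpos
      have h1 := hpsq n
      rw [hn] at h1
      have hε1 : (1/(n+1) : ℝ) ≤ 1 := by
        rw [div_le_one (by positivity)]
        have : (0:ℝ) ≤ n := Nat.cast_nonneg n
        linarith
      have hεpos : (0:ℝ) < 1/(n+1) := by positivity
      have habs : -⟪v, f p⟫ ≤ |⟪v, f p⟫| := neg_le_abs _
      have hbound : m ≤ q p z0 + (1/(n+1) : ℝ) * (|⟪v, f p⟫| + ‖v‖^2) := by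
        have e1 : (1/(n+1) : ℝ)^2 * ‖v‖^2 ≤ (1/(n+1) : ℝ) * ‖v‖^2 :=
          mul_le_mul_of_nonneg_right (by nlinarith) (sq_nonneg ‖v‖)
        nlinarith
      have : m - q p z0 ≤ (1/(n+1) : ℝ) * (|⟪v, f p⟫| + ‖v‖^2) := by linarith
      have h2 : (1/(n+1) : ℝ) * (|⟪v, f p⟫| + ‖v‖^2) < δ * (|⟪v, f p⟫| + ‖v‖^2 + 1) := by
        have hpos : (0:ℝ) < |⟪v, f p⟫| + ‖v‖^2 + 1 := by positivity
        have h3 : (0:ℝ) ≤ |⟪v, f p⟫| + ‖v‖^2 := by positivity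
        nlinarith
      have h4 : δ * (|⟪v, f p⟫| + ‖v‖^2 + 1) = m - q p z0 := by
        rw [hδdef]; field_simp
      linarith
    have hact : q p z0 = m := le_antisymm hqp hmqp
    have hfpS : f p ∈ S := ⟨p, ⟨hpF, hact⟩, rfl⟩
    have hfpC : f p ∈ C := subset_convexHull ℝ S hfpS
    have hvfp : ‖v‖^2 ≤ ⟪v, f p⟫ := hkey _ hfpC
    -- contradiction: for small ε, m ≤ m - ε⟪v,f p⟫ + ε² ‖v‖²
    obtain ⟨n, hn, hnδ⟩ := hsmall (1/2) (by norm_num)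
    have h1 := hpsq n
    rw [hn, hact] at h1
    have hεpos : (0:ℝ) < 1/(n+1) := by positivity
    have hA : (1/(n+1) : ℝ) * ‖v‖^2 ≤ (1/(n+1) : ℝ) * ⟪v, f p⟫ :=
      mul_le_mul_of_nonneg_left hvfp hεpos.le
    have hB : (0:ℝ) < (1/2 - 1/(n+1)) * ((1/(n+1)) * ‖v‖^2) :=
      mul_pos (by linarith) (mul_pos hεpos hvpos)
    nlinarith
  -- Step 2: extract convex combination and conclude m ≤ 0
  rw [convexHull_eq] at hz
  obtain ⟨ι, t, w, zf, hw0, hw1, hzf, hcm⟩ := hz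
  rw [Finset.centerMass_eq_of_sum_1 _ _ hw1] at hcm
  have hch : ∀ i : ι, ∃ pp : E × E, i ∈ t → (pp ∈ F ∧ q pp z0 = m) ∧ f pp = zf i := by
    intro i
    by_cases h : i ∈ t
    · obtain ⟨pp, hpp, hfp⟩ := hzf i h
      exact ⟨pp, fun _ => ⟨hpp, hfp⟩⟩
    · exact ⟨pm, fun h' => absurd h' h⟩
  choose pa hpa using hch
  set a : ι → E := fun i => z0 - (pa i).1 with ha
  set b : ι → E := fun i => z0 + (pa i).2 with hb
  have hab : ∀ i ∈ t, a i + b i = zf i := fun i hi => (hpa i hi).2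
  have hq : ∀ i ∈ t, ⟪a i, b i⟫ = m := fun i hi => (hpa i hi).1.2
  have hmono' : ∀ i ∈ t, ∀ j ∈ t, ⟪a i - a j, b i - b j⟫ ≤ 0 := by
    intro i hi j hj
    have h := hmono (pa i) (hpa i hi).1.1 (pa j) (hpa j hj).1.1
    have e : a i - a j = -((pa i).1 - (pa j).1) := by simp only [ha]; abel
    have e2 : b i - b j = (pa i).2 - (pa j).2 := by simp only [hb]; abel
    rw [e, e2, inner_neg_left]
    linarith
  set c : E := ∑ i ∈ t, w i • a i with hc
  have hcb : ∑ i ∈ t, w i • b i = -c := by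
    have h0 : ∑ i ∈ t, w i • (a i + b i) = 0 := by
      rw [Finset.sum_congr rfl (fun i hi => by rw [hab i hi])]
      exact hcm
    rw [hc]
    have : ∑ i ∈ t, w i • (a i + b i) = ∑ i ∈ t, w i • a i + ∑ i ∈ t, w i • b i := by
      rw [← Finset.sum_add_distrib]
      exact Finset.sum_congr rfl (fun i _ => smul_add _ _ _)
    rw [this] at h0
    exact eq_neg_of_add_eq_zero_right h0
  -- double sums
  have e1 : ∑ i ∈ t, ∑ j ∈ t, w i * w j * ⟪a i, b i⟫ = m := by
    calc ∑ i ∈ t, ∑ j ∈ t, w i * w j * ⟪a i, b i⟫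
        = ∑ i ∈ t, (w i * ⟪a i, b i⟫) * ∑ j ∈ t, w j := by
          refine Finset.sum_congr rfl fun i _ => ?_
          rw [Finset.mul_sum]
          exact Finset.sum_congr rfl fun j _ => by ring
      _ = ∑ i ∈ t, w i * m := by
          refine Finset.sum_congr rfl fun i hi => ?_
          rw [hw1, hq i hi]; ring
      _ = m := by rw [← Finset.sum_mul, hw1, one_mul]
  have e4 : ∑ i ∈ t, ∑ j ∈ t, w i * w j * ⟪a j, b j⟫ = m := by
    rw [Finset.sum_comm]
    calc ∑ j ∈ t, ∑ i ∈ t, w i * w j * ⟪a j, b j⟫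
        = ∑ j ∈ t, (w j * ⟪a j, b j⟫) * ∑ i ∈ t, w i := by
          refine Finset.sum_congr rfl fun j _ => ?_
          rw [Finset.mul_sum]
          exact Finset.sum_congr rfl fun i _ => by ring
      _ = ∑ j ∈ t, w j * m := by
          refine Finset.sum_congr rfl fun j hj => ?_
          rw [hw1, hq j hj]; ring
      _ = m := by rw [← Finset.sum_mul, hw1, one_mul]
  have e2 : ∑ i ∈ t, ∑ j ∈ t, w i * w j * ⟪a i, b j⟫ = ⟪c, -c⟫ := by
    rw [← hcb, hc, sum_inner]
    refine Finset.sum_congr rfl fun i _ => ?_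
    rw [real_inner_smul_left, inner_sum, Finset.mul_sum]
    refine Finset.sum_congr rfl fun j _ => ?_
    rw [real_inner_smul_right]; ring
  have e3 : ∑ i ∈ t, ∑ j ∈ t, w i * w j * ⟪a j, b i⟫ = ⟪c, -c⟫ := by
    rw [Finset.sum_comm, ← hcb, hc, sum_inner]
    refine Finset.sum_congr rfl fun j _ => ?_
    rw [real_inner_smul_left, inner_sum, Finset.mul_sum]
    refine Finset.sum_congr rfl fun i _ => ?_
    rw [real_inner_smul_right]; ring
  have expand : ∑ i ∈ t, ∑ j ∈ t, w i * w j * ⟪a i - a j, b i - b j⟫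
      = 2*m - 2*⟪c, -c⟫ := by
    have : ∀ i ∈ t, ∀ j ∈ t, w i * w j * ⟪a i - a j, b i - b j⟫
        = w i * w j * ⟪a i, b i⟫ - w i * w j * ⟪a i, b j⟫
          - w i * w j * ⟪a j, b i⟫ + w i * w j * ⟪a j, b j⟫ := by
      intro i _ j _
      rw [inner_sub_left, inner_sub_right, inner_sub_right]
      ring
    calc ∑ i ∈ t, ∑ j ∈ t, w i * w j * ⟪a i - a j, b i - b j⟫
        = ∑ i ∈ t, ∑ j ∈ t, (w i * w j * ⟪a i, b i⟫ - w i * w j * ⟪a i, b j⟫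
          - w i * w j * ⟪a j, b i⟫ + w i * w j * ⟪a j, b j⟫) := by
          exact Finset.sum_congr rfl fun i hi => Finset.sum_congr rfl fun j hj =>
            this i hi j hj
      _ = 2*m - 2*⟪c, -c⟫ := by
          simp only [Finset.sum_add_distrib, Finset.sum_sub_distrib]
          rw [e1, e2, e3, e4]; ring
  have hneg : ∑ i ∈ t, ∑ j ∈ t, w i * w j * ⟪a i - a j, b i - b j⟫ ≤ 0 := by
    refine Finset.sum_nonpos fun i hi => Finset.sum_nonpos fun j hj => ?_
    exact mul_nonpos_of_nonneg_of_nonpos (mul_nonneg (hw0 i hi) (hw0 j hj))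
      (hmono' i hi j hj)
  have hcc : ⟪c, -c⟫ = -‖c‖^2 := by
    rw [inner_neg_right, real_inner_self_eq_norm_sq]
  rw [expand, hcc] at hneg
  nlinarith [sq_nonneg ‖c‖]

lemma g_mono {F G : Finset (E × E)} (hF : F.Nonempty) (hG : G.Nonempty) (hFG : F ⊆ G)
    (z : E) : g F hF z ≤ g G hG z :=
  Finset.sup'_le _ _ fun p hp => le_g hG (hFG hp) z


lemma fin_lemma [CompleteSpace E] (F : Finset (E × E)) (hF : F.Nonempty)
    (hmono : ∀ p ∈ F, ∀ r ∈ F, 0 ≤ ⟪p.1 - r.1, p.2 - r.2⟫) :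
    ∃ z0 : E, g F hF z0 ≤ 0 ∧ ∀ z, g F hF z0 + ‖z - z0‖^2/2 ≤ g F hF z := by
  obtain ⟨z0, hz0⟩ := exists_min F hF
  refine ⟨z0, min_nonpos F hF hmono z0 (fun z => ?_), hz0⟩
  have := hz0 z
  nlinarith [sq_nonneg ‖z - z0‖]

theorem core_lemma [CompleteSpace E] (A : Set (E × E)) (hne : A.Nonempty)
    (hmono : ∀ p ∈ A, ∀ r ∈ A, 0 ≤ ⟪p.1 - r.1, p.2 - r.2⟫) :
    ∃ z : E, ∀ p ∈ A, ⟪z - p.1, z + p.2⟫ ≤ 0 := by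
  classical
  obtain ⟨p0, hp0⟩ := hne
  set M : Set ℝ := {x : ℝ | ∃ (F : Finset (E × E)) (hF : F.Nonempty),
    ↑F ⊆ A ∧ ∃ z0 : E, g F hF z0 = x ∧ ∀ z, g F hF z0 + ‖z - z0‖^2/2 ≤ g F hF z} with hM
  have hadm : ∀ (F : Finset (E × E)) (hF : F.Nonempty), ↑F ⊆ A →
      ∃ z0 : E, g F hF z0 ∈ M ∧ g F hF z0 ≤ 0 ∧
        ∀ z, g F hF z0 + ‖z - z0‖^2/2 ≤ g F hF z := by
    intro F hF hFA
    have hm : ∀ p ∈ F, ∀ r ∈ F, 0 ≤ ⟪p.1 - r.1, p.2 - r.2⟫ := fun p hp r hr =>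
      hmono p (hFA hp) r (hFA hr)
    obtain ⟨z0, hz1, hz2⟩ := fin_lemma F hF hm
    exact ⟨z0, ⟨F, hF, hFA, z0, rfl, hz2⟩, hz1, hz2⟩
  have hMne : M.Nonempty := by
    obtain ⟨z0, h1, _, _⟩ := hadm {p0} (Finset.singleton_nonempty p0) (by simpa using hp0)
    exact ⟨_, h1⟩
  have hMbdd : BddAbove M := by
    refine ⟨0, ?_⟩
    rintro x ⟨F, hF, hFA, z0, rfl, hgrow⟩
    obtain ⟨z1, _, hz1le, hz1grow⟩ := hadm F hF hFA
    have h1 := hgrow z1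
    have h2 := hz1grow z0
    nlinarith [sq_nonneg ‖z1 - z0‖, sq_nonneg ‖z0 - z1‖]
  set ms : ℝ := sSup M with hms
  have hms0 : ms ≤ 0 := by
    refine csSup_le hMne ?_
    rintro x ⟨F, hF, hFA, z0, rfl, hgrow⟩
    obtain ⟨z1, _, hz1le, hz1grow⟩ := hadm F hF hFA
    nlinarith [hgrow z1, hz1grow z0, sq_nonneg ‖z1 - z0‖, sq_nonneg ‖z0 - z1‖]
  have happrox : ∀ n : ℕ, ∃ (F : Finset (E × E)) (hF : F.Nonempty), ↑F ⊆ A ∧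
      ∃ z0 : E, (ms - 1/(n+1) < g F hF z0) ∧
        ∀ z, g F hF z0 + ‖z - z0‖^2/2 ≤ g F hF z := by
    intro n
    have hlt : ms - 1/(n+1) < ms := by
      have : (0:ℝ) < 1/(n+1) := by positivity
      linarith
    obtain ⟨x, hxM, hx⟩ := exists_lt_of_lt_csSup hMne hlt
    obtain ⟨F, hF, hFA, z0, rfl, hgrow⟩ := hxM
    exact ⟨F, hF, hFA, z0, hx, hgrow⟩
  choose Fn hFn hFAn zn hlown hgrown using happrox
  -- increasing unions
  set Gn : ℕ → Finset (E × E) := fun n => (Finset.range (n+1)).biUnion Fn with hGn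
  have hGnne : ∀ n, (Gn n).Nonempty := by
    intro n
    obtain ⟨p, hp⟩ := hFn n
    exact ⟨p, Finset.mem_biUnion.2 ⟨n, Finset.self_mem_range_succ n, hp⟩⟩
  have hGnsub : ∀ n, ↑(Gn n) ⊆ A := by
    intro n p hp
    rw [Finset.mem_coe, Finset.mem_biUnion] at hp
    obtain ⟨k, _, hk⟩ := hp
    exact hFAn k hk
  have hFGn : ∀ n, Fn n ⊆ Gn n := fun n p hp =>
    Finset.mem_biUnion.2 ⟨n, Finset.self_mem_range_succ n, hp⟩
  have hGmono : ∀ {n k : ℕ}, n ≤ k → Gn n ⊆ Gn k := by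
    intro n k hnk p hp
    rw [Finset.mem_biUnion] at hp ⊢
    obtain ⟨i, hi, hpi⟩ := hp
    exact ⟨i, Finset.mem_range.2 (lt_of_lt_of_le (Finset.mem_range.1 hi)
      (Nat.succ_le_succ hnk)), hpi⟩
  have hGadm := fun n => hadm (Gn n) (hGnne n) (hGnsub n)
  choose w hwM hw0 hwgrow using hGadm
  -- value bounds
  have hwle : ∀ n, g (Gn n) (hGnne n) (w n) ≤ ms := fun n => le_csSup hMbdd (hwM n)
  have hwlow : ∀ n, ms - 1/(n+1) < g (Gn n) (hGnne n) (w n) := by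
    intro n
    have h1 : g (Fn n) (hFn n) (zn n) ≤ g (Fn n) (hFn n) (w n) := by
      have := hgrown n (w n)
      nlinarith [sq_nonneg ‖w n - zn n‖]
    have h2 : g (Fn n) (hFn n) (w n) ≤ g (Gn n) (hGnne n) (w n) :=
      g_mono _ _ (hFGn n) (w n)
    have := hlown n
    linarith
  -- Cauchy estimate
  have hkey : ∀ n k : ℕ, n ≤ k → ‖w k - w n‖^2 ≤ 2*(1/(n+1)) := by
    intro n k hnk
    have h1 := hwgrow n (w k)
    have h2 : g (Gn n) (hGnne n) (w k) ≤ g (Gn k) (hGnne k) (w k) :=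
      g_mono _ _ (hGmono hnk) (w k)
    have h3 := hwle k
    have h4 := hwlow n
    linarith
  have hcauchy : CauchySeq w := by
    rw [Metric.cauchySeq_iff']
    intro ε hε
    obtain ⟨N, hN⟩ := exists_nat_gt (2/ε^2)
    refine ⟨N, fun n hn => ?_⟩
    have h1 := hkey N n hn
    have h3 : (0:ℝ) < (N:ℝ) + 1 := by positivity
    have h6 : 2*((1:ℝ)/(N+1)) < ε^2 := by
      rw [mul_one_div, div_lt_iff₀ h3]
      have hε2 : (0:ℝ) < ε^2 := by positivity
      have h4 : 2/ε^2 < (N:ℝ) := hN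
      calc (2:ℝ) = 2/ε^2 * ε^2 := by field_simp
      _ < N * ε^2 := mul_lt_mul_of_pos_right h4 hε2
      _ ≤ ε^2 * (N+1) := by nlinarith
    have h5 : ‖w n - w N‖^2 < ε^2 := by linarith
    rw [dist_eq_norm]
    nlinarith [norm_nonneg (w n - w N)]
  obtain ⟨zbar, hzbar⟩ := cauchySeq_tendsto_of_complete hcauchy
  refine ⟨zbar, fun p hp => ?_⟩
  -- insert p into Gn n
  set Hn : ℕ → Finset (E × E) := fun n => insert p (Gn n) with hHn
  have hHnne : ∀ n, (Hn n).Nonempty := fun n => Finset.insert_nonempty _ _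
  have hHnsub : ∀ n, ↑(Hn n) ⊆ A := by
    intro n r hr
    rw [hHn] at hr
    simp only [Finset.coe_insert, Set.mem_insert_iff] at hr
    rcases hr with rfl | hr
    · exact hp
    · exact hGnsub n hr
  have hHadm := fun n => hadm (Hn n) (hHnne n) (hHnsub n)
  choose y hyM hy0 hygrow using hHadm
  have hydist : ∀ n, ‖y n - w n‖^2 ≤ 2*(1/(n+1)) := by
    intro n
    have h1 := hwgrow n (y n)
    have h2 : g (Gn n) (hGnne n) (y n) ≤ g (Hn n) (hHnne n) (y n) :=
      g_mono _ _ (Finset.subset_insert _ _) (y n)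
    have h3 : g (Hn n) (hHnne n) (y n) ≤ ms := le_csSup hMbdd (hyM n)
    have h4 := hwlow n
    linarith
  have hqy : ∀ n, q p (y n) ≤ 0 := fun n =>
    le_trans (le_g (hHnne n) (Finset.mem_insert_self p (Gn n)) (y n)) (hy0 n)
  -- y n → zbar
  have hbnd : ∀ n : ℕ, dist (y n) zbar ≤ Real.sqrt (2*(1/(n+1))) + dist (w n) zbar := by
    intro n
    have h1 : dist (y n) (w n) ≤ Real.sqrt (2*(1/(n+1))) := by
      rw [dist_eq_norm]
      have h := Real.sqrt_le_sqrt (hydist n)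
      rwa [Real.sqrt_sq (norm_nonneg _)] at h
    calc dist (y n) zbar ≤ dist (y n) (w n) + dist (w n) zbar := dist_triangle _ _ _
    _ ≤ Real.sqrt (2*(1/(n+1))) + dist (w n) zbar := by linarith
  have htend : Filter.Tendsto (fun n : ℕ => Real.sqrt (2*(1/(n+1))) + dist (w n) zbar)
      Filter.atTop (nhds 0) := by
    have h1 : Filter.Tendsto (fun n : ℕ => 2*((1:ℝ)/(n+1))) Filter.atTop (nhds 0) := by
      have := tendsto_one_div_add_atTop_nhds_zero_nat.const_mul (2:ℝ)
      simpa using this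
    have h2 : Filter.Tendsto (fun n : ℕ => Real.sqrt (2*(1/(n+1)))) Filter.atTop (nhds 0) := by
      have h := (Real.continuous_sqrt.tendsto 0).comp h1
      rw [Real.sqrt_zero] at h
      exact h
    have h3 : Filter.Tendsto (fun n : ℕ => dist (w n) zbar) Filter.atTop (nhds 0) :=
      tendsto_iff_dist_tendsto_zero.1 hzbar
    simpa using h2.add h3
  have hytend : Filter.Tendsto y Filter.atTop (nhds zbar) := by
    rw [tendsto_iff_dist_tendsto_zero]
    exact squeeze_zero (fun n => dist_nonneg) hbnd htend
  have hq : Filter.Tendsto (fun n => q p (y n)) Filter.atTop (nhds (q p zbar)) :=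
    ((q_cont p).continuousAt.tendsto).comp hytend
  exact le_of_tendsto hq (Filter.Eventually.of_forall hqy)

end MintyCore

/-- A relation `A ⊆ H ⊕ H` is monotone if `Re⟪u - x, v - y⟫ ≥ 0` for all
`(u,v), (x,y) ∈ A`. -/
def MonotoneRel {H : Type*} [NormedAddCommGroup H] [InnerProductSpace ℂ H]
    (A : Set (H × H)) : Prop :=
  ∀ p ∈ A, ∀ q ∈ A, 0 ≤ (inner ℂ (p.1 - q.1) (p.2 - q.2) : ℂ).re

/-- A relation is maximal monotone if it is monotone and admits no proper monotone
extension. -/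
def MaximalMonotoneRel {H : Type*} [NormedAddCommGroup H] [InnerProductSpace ℂ H]
    (A : Set (H × H)) : Prop :=
  MonotoneRel A ∧ ∀ B : Set (H × H), MonotoneRel B → A ⊆ B → B = A

section MintyGlue
variable {H : Type*} [NormedAddCommGroup H] [InnerProductSpace ℂ H]

lemma aux_surj_to_max (A : Set (H × H)) (hA : MonotoneRel A) (l : ℝ) (hl : 0 < l)
    (hsurj : {z : H | ∃ p ∈ A, z = p.1 + (l : ℂ) • p.2} = Set.univ) :
    MaximalMonotoneRel A := by
  refine ⟨hA, fun B hB hAB => ?_⟩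
  refine Set.Subset.antisymm (fun p hp => ?_) hAB
  obtain ⟨x0, y0⟩ := p
  have hx : (x0 + (l : ℂ) • y0) ∈ {z : H | ∃ p ∈ A, z = p.1 + (l : ℂ) • p.2} := by
    rw [hsurj]; trivial
  obtain ⟨⟨u, v⟩, huv, heq⟩ := hx
  have h1 : 0 ≤ (inner ℂ (x0 - u) (y0 - v) : ℂ).re := hB (x0, y0) hp (u, v) (hAB huv)
  have h2 : x0 - u = (l : ℂ) • (v - y0) := by
    rw [smul_sub, sub_eq_sub_iff_add_eq_add]
    simpa only [add_comm] using heq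
  have hvy : v = y0 := by
    rw [h2] at h1
    rw [inner_smul_left] at h1
    rw [show (starRingEnd ℂ) ((l : ℝ) : ℂ) = ((l : ℝ) : ℂ) from Complex.conj_ofReal l] at h1
    rw [show y0 - v = -(v - y0) by abel] at h1
    rw [inner_neg_right] at h1
    have h3 : (inner ℂ (v - y0) (v - y0) : ℂ) = (‖v - y0‖^2 : ℝ) := by
      rw [inner_self_eq_norm_sq_to_K]; norm_num
    rw [h3] at h1
    have h4 : ((l : ℂ) * -((‖v - y0‖^2 : ℝ) : ℂ)).re = l * -(‖v - y0‖^2) := by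
      simp [← Complex.ofReal_pow]
    rw [h4] at h1
    have h5 : ‖v - y0‖^2 ≤ 0 := by nlinarith
    have h6 : ‖v - y0‖ = 0 := by nlinarith [sq_nonneg ‖v - y0‖, norm_nonneg (v - y0)]
    have h7 : v - y0 = 0 := norm_eq_zero.1 h6
    linear_combination (norm := abel) h7
  have hxu : x0 = u := by
    rw [hvy] at h2
    simp at h2
    linear_combination (norm := abel) h2
  have hfin : ((x0, y0) : H × H) = (u, v) := by rw [hxu, hvy]
  rw [hfin]
  exact huv

lemma aux_max_to_surj [CompleteSpace H] (A : Set (H × H)) (hmax : MaximalMonotoneRel A)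
    (l : ℝ) (hl : 0 < l) :
    {z : H | ∃ p ∈ A, z = p.1 + (l : ℂ) • p.2} = Set.univ := by
  letI : InnerProductSpace ℝ H := InnerProductSpace.complexToReal
  have hbridge : ∀ x y : H, (@inner ℝ H _ x y) = (inner ℂ x y : ℂ).re := fun x y => rfl
  have hAne : A.Nonempty := by
    by_contra h
    rw [Set.not_nonempty_iff_eq_empty] at h
    have hmono0 : MonotoneRel ({((0 : H), (0 : H))} : Set (H × H)) := by
      intro p hp q hq
      simp only [Set.mem_singleton_iff] at hp hq
      rw [hp, hq]
      simp
    have := hmax.2 {((0 : H), (0 : H))} hmono0 (h ▸ Set.empty_subset _)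
    rw [h] at this
    exact absurd this (by simp [Set.eq_empty_iff_forall_notMem])
  rw [Set.eq_univ_iff_forall]
  intro wpt
  set B : Set (H × H) := (fun p : H × H => (p.1, (l : ℂ) • p.2 - wpt)) '' A with hBdef
  have hBne : B.Nonempty := hAne.image _
  have hBmono : ∀ p ∈ B, ∀ r ∈ B, 0 ≤ (@inner ℝ H _ (p.1 - r.1) (p.2 - r.2)) := by
    rintro p ⟨⟨u, v⟩, huv, rfl⟩ r ⟨⟨x, y⟩, hxy, rfl⟩
    rw [hbridge]
    simp only
    have e : ((l : ℂ) • v - wpt) - ((l : ℂ) • y - wpt) = (l : ℂ) • (v - y) := by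
      rw [smul_sub]; abel
    rw [e, inner_smul_right, Complex.re_ofReal_mul]
    exact mul_nonneg hl.le (hmax.1 (u, v) huv (x, y) hxy)
  obtain ⟨z, hz⟩ := core_lemma B hBne hBmono
  have hz' : ∀ pq : H × H, pq ∈ A →
      ((inner ℂ (z - pq.1) (z + ((l : ℂ) • pq.2 - wpt)) : ℂ)).re ≤ 0 := by
    intro pq hpq
    have := hz ((fun p : H × H => (p.1, (l : ℂ) • p.2 - wpt)) pq) ⟨pq, hpq, rfl⟩
    rw [hbridge] at this
    exact this
  set ypt : H := ((l : ℂ))⁻¹ • (wpt - z) with hypt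
  have hlne : ((l : ℝ) : ℂ) ≠ 0 := by
    simp only [ne_eq, Complex.ofReal_eq_zero]
    exact hl.ne'
  -- key inner product inequality for the new pair
  have hcompat : ∀ pq : H × H, pq ∈ A → 0 ≤ (inner ℂ (z - pq.1) (ypt - pq.2) : ℂ).re := by
    intro pq hpq
    have e0 : ((l:ℂ))⁻¹ • ((l:ℂ) • pq.2) = pq.2 := by
      rw [smul_smul, inv_mul_cancel₀ hlne, one_smul]
    have e : ypt - pq.2 = -(((l:ℂ))⁻¹ • (z + ((l : ℂ) • pq.2 - wpt))) := by
      rw [hypt]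
      simp only [smul_add, smul_sub, e0, neg_add, neg_sub]
      abel
    rw [e, inner_neg_right,
      show ((l:ℂ))⁻¹ = ((l⁻¹ : ℝ) : ℂ) from (Complex.ofReal_inv l).symm,
      inner_smul_right, Complex.neg_re, Complex.re_ofReal_mul]
    nlinarith [hz' pq hpq, inv_pos.mpr hl]
  have hB'mono : MonotoneRel (insert ((z, ypt) : H × H) A) := by
    rintro p hp q hq
    rcases Set.mem_insert_iff.1 hp with rfl | hpA
    · rcases Set.mem_insert_iff.1 hq with rfl | hqA
      · simp
      · exact hcompat q hqA
    · rcases Set.mem_insert_iff.1 hq with rfl | hqA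
      · rw [show p.1 - (z, ypt).1 = -((z, ypt).1 - p.1) by abel,
          show p.2 - (z, ypt).2 = -((z, ypt).2 - p.2) by abel, inner_neg_neg]
        exact hcompat p hpA
      · exact hmax.1 p hpA q hqA
  have hins := hmax.2 _ hB'mono (Set.subset_insert _ _)
  have hmem : ((z, ypt) : H × H) ∈ A := by
    rw [← hins]
    exact Set.mem_insert _ _
  refine ⟨(z, ypt), hmem, ?_⟩
  simp only
  rw [hypt, smul_smul, mul_inv_cancel₀ hlne, one_smul]
  abel


end MintyGlue

/-- Minty's theorem: for a monotone relation `A` on a complex Hilbert space,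
maximal monotonicity is equivalent to surjectivity of `1 + λ A` for all `λ > 0`,
which in turn is equivalent to surjectivity of `1 + λ A` for some `λ > 0`. -/
theorem minty_theorem {H : Type*} [NormedAddCommGroup H] [InnerProductSpace ℂ H]
    [CompleteSpace H] (A : Set (H × H)) (hA : MonotoneRel A) :
    (MaximalMonotoneRel A ↔
      ∀ l : ℝ, 0 < l → {z : H | ∃ p ∈ A, z = p.1 + (l : ℂ) • p.2} = Set.univ) ∧
    ((∀ l : ℝ, 0 < l → {z : H | ∃ p ∈ A, z = p.1 + (l : ℂ) • p.2} = Set.univ) ↔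
      ∃ l : ℝ, 0 < l ∧ {z : H | ∃ p ∈ A, z = p.1 + (l : ℂ) • p.2} = Set.univ) := by
  constructor
  · constructor
    · intro hmax l hl
      exact aux_max_to_surj A hmax l hl
    · intro hall
      exact aux_surj_to_max A hA 1 one_pos (hall 1 one_pos)
  · constructor
    · intro hall
      exact ⟨1, one_pos, hall 1 one_pos⟩
    · rintro ⟨l, hl, hsurj⟩ l' hl'
      exact aux_max_to_surj A (aux_surj_to_max A hA l hl hsurj) l' hl'
end

section
/- Let H be a complex Hilbert space, P ∈ L(H) selfadjoint with P ≥ c for some c > 0, and A ⊆ H ⊕ H a maximal monotone relation. Denote by H_P the Hilbert space H equipped with the weighted inner product ⟨x,y⟩_{H_P} := ⟨Px, y⟩_H. Then the relation AP := {(x,y) ∈ H_P ⊕ H_P : (Px, y) ∈ A} is maximal monotone in H_P. -/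
/-- Monotonicity of a relation with respect to a given sesquilinear form `ip`. -/
def MonotoneRelWRT {H : Type*} [AddCommGroup H] (ip : H → H → ℂ)
    (A : Set (H × H)) : Prop :=
  ∀ p ∈ A, ∀ q ∈ A, 0 ≤ (ip (p.1 - q.1) (p.2 - q.2)).re

def MaximalMonotoneRelWRT {H : Type*} [AddCommGroup H] (ip : H → H → ℂ)
    (A : Set (H × H)) : Prop :=
  MonotoneRelWRT ip A ∧ ∀ B : Set (H × H), MonotoneRelWRT ip B → A ⊆ B → B = A


lemma weighted_surj {H : Type*} [NormedAddCommGroup H]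
    [InnerProductSpace ℂ H] [CompleteSpace H]
    (P : H →L[ℂ] H) (hP : IsSelfAdjoint P) (c : ℝ) (hc : 0 < c)
    (hPc : ∀ x : H, c * ‖x‖ ^ 2 ≤ (inner ℂ (P x) x : ℂ).re) :
    Function.Surjective P := by
  have hbound : ∀ x : H, c * ‖x‖ ≤ ‖P x‖ := by
    intro x
    rcases eq_or_ne x 0 with rfl | hx
    · simp
    have h0 : (inner ℂ (P x) x : ℂ).re ≤ ‖P x‖ * ‖x‖ := by
      calc (inner ℂ (P x) x : ℂ).re ≤ ‖(inner ℂ (P x) x : ℂ)‖ := Complex.re_le_norm _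
        _ ≤ ‖P x‖ * ‖x‖ := norm_inner_le_norm _ _
    have hxpos : 0 < ‖x‖ := norm_pos_iff.mpr hx
    nlinarith [hPc x]
  have hanti : AntilipschitzWith (⟨c, hc.le⟩ : NNReal)⁻¹ P := by
    apply AntilipschitzWith.of_le_mul_dist
    intro x y
    have h := hbound (x - y)
    simp only [map_sub] at h
    rw [dist_eq_norm, dist_eq_norm]
    show ‖x - y‖ ≤ c⁻¹ * ‖P x - P y‖
    rw [inv_mul_eq_div,
      le_div_iff₀ hc]
    calc ‖x - y‖ * c = c * ‖x - y‖ := mul_comm _ _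
      _ ≤ ‖P x - P y‖ := h
  have hclosed : IsClosed ((LinearMap.range (P : H →ₗ[ℂ] H) : Submodule ℂ H) : Set H) := by
    have h := hanti.isClosed_range P.uniformContinuous
    have he : ((LinearMap.range (P : H →ₗ[ℂ] H) : Submodule ℂ H) : Set H) = Set.range P := by
      ext z; simp [LinearMap.mem_range]
    rwa [he]
  have hcomp : CompleteSpace (LinearMap.range (P : H →ₗ[ℂ] H)) := hclosed.completeSpace_coe
  have hadj : ContinuousLinearMap.adjoint P = P := hP
  have horth : (LinearMap.range (P : H →ₗ[ℂ] H))ᗮ = ⊥ := by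
    rw [Submodule.eq_bot_iff]
    intro y hy
    have h1 : (inner ℂ (P (P y)) y : ℂ) = 0 := hy (P (P y)) ⟨P y, rfl⟩
    have h2 : (inner ℂ (P y) (P y) : ℂ) = 0 := by
      have h4 := ContinuousLinearMap.adjoint_inner_left P y (P y)
      rw [hadj] at h4
      exact h4.symm.trans h1
    have hPy : P y = 0 := inner_self_eq_zero.mp h2
    have h3 := hPc y
    rw [hPy] at h3
    simp only [inner_zero_left, Complex.zero_re] at h3
    have h4 : ‖y‖ ^ 2 = 0 := le_antisymm (by nlinarith) (sq_nonneg _)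
    have h5 : ‖y‖ = 0 := pow_eq_zero_iff two_ne_zero |>.mp h4
    simpa using h5
  have : LinearMap.range (P : H →ₗ[ℂ] H) = ⊤ := (Submodule.orthogonal_eq_bot_iff).mp horth
  exact LinearMap.range_eq_top.mp this

/-- If `P` is a selfadjoint bounded operator with `P ≥ c > 0` and `A` is maximal
monotone, then `AP = {(x,y) : (Px, y) ∈ A}` is maximal monotone with respect to the
weighted inner product `⟨x,y⟩_{H_P} = ⟨Px, y⟩`. -/
theorem weighted_maximalMonotone {H : Type*} [NormedAddCommGroup H]
    [InnerProductSpace ℂ H] [CompleteSpace H]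
    (P : H →L[ℂ] H) (hP : IsSelfAdjoint P) (c : ℝ) (hc : 0 < c)
    (hPc : ∀ x : H, c * ‖x‖ ^ 2 ≤ (inner ℂ (P x) x : ℂ).re)
    (A : Set (H × H)) (hA : MaximalMonotoneRel A) :
    MaximalMonotoneRelWRT (fun x y => (inner ℂ (P x) y : ℂ))
      {p : H × H | (P p.1, p.2) ∈ A} := by
  obtain ⟨hAmono, hAmax⟩ := hA
  have hsurj := weighted_surj P hP c hc hPc
  constructor
  · intro p hp q hq
    have h := hAmono _ hp _ hq
    simpa [MonotoneRel, map_sub] using h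
  · intro B hB hAB
    set B' : Set (H × H) := (fun p : H × H => (P p.1, p.2)) '' B with hB'def
    have hB'mono : MonotoneRel B' := by
      rintro _ ⟨p, hp, rfl⟩ _ ⟨q, hq, rfl⟩
      have h := hB p hp q hq
      simpa [map_sub] using h
    have hA_sub : A ⊆ B' := by
      rintro ⟨u, v⟩ huv
      obtain ⟨x, rfl⟩ := hsurj u
      exact ⟨(x, v), hAB huv, rfl⟩
    have hB'A := hAmax B' hB'mono hA_sub
    ext ⟨x, y⟩
    constructor
    · intro hxy
      have hmem : (P x, y) ∈ B' := ⟨(x, y), hxy, rfl⟩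
      rw [hB'A] at hmem
      exact hmem
    · exact fun h => hAB h
end

section
/- Let A ⊆ H ⊕ H be a maximal monotone relation, λ > 0, and let x be in the domain of A (i.e. x ∈ [H]A). Let A⁰(x) denote the element of minimal norm of the closed convex set A[{x}] = {y : (x,y) ∈ A}. Then |A_λ(x)| ≤ |A⁰(x)|, where A_λ is the Yosida approximation of A. -/
/-- For a maximal monotone relation `A`, `λ > 0` and `x` in the domain of `A`, the
Yosida approximation `A_λ(x) = λ⁻¹(x − (1+λA)⁻¹(x))` satisfies `|A_λ(x)| ≤ |A⁰(x)|`,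
where `A⁰(x)` is the minimal-norm element of `A[{x}]`. Here `j` plays the role of the
resolvent `(1+λA)⁻¹(x)`, characterized by `(j, λ⁻¹(x − j)) ∈ A`. -/
theorem yosida_le_principal_section {H : Type*} [NormedAddCommGroup H]
    [InnerProductSpace ℂ H] [CompleteSpace H]
    (A : Set (H × H)) (hA : MaximalMonotoneRel A) (l : ℝ) (hl : 0 < l)
    (x j y₀ : H) (hj : (j, ((l : ℂ))⁻¹ • (x - j)) ∈ A)
    (hy₀ : (x, y₀) ∈ A) (hmin : ∀ y : H, (x, y) ∈ A → ‖y₀‖ ≤ ‖y‖) :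
    ‖((l : ℂ))⁻¹ • (x - j)‖ ≤ ‖y₀‖ := by
  set u : H := x - j with hu
  have hmono := hA.1 (x, y₀) hy₀ (j, ((l : ℂ))⁻¹ • u) hj
  simp only at hmono
  have hkey : (inner ℂ u (((l : ℂ))⁻¹ • u) : ℂ).re ≤ (inner ℂ u y₀ : ℂ).re := by
    have : (inner ℂ u (y₀ - ((l : ℂ))⁻¹ • u) : ℂ).re
        = (inner ℂ u y₀ : ℂ).re - (inner ℂ u (((l : ℂ))⁻¹ • u) : ℂ).re := by
      rw [inner_sub_right, Complex.sub_re]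
    linarith [hmono, this ▸ hmono]
  have hl' : (0:ℝ) < l⁻¹ := inv_pos.mpr hl
  have hLHS : (inner ℂ u (((l : ℂ))⁻¹ • u) : ℂ).re = l⁻¹ * ‖u‖ ^ 2 := by
    rw [inner_smul_right]
    simp [← Complex.ofReal_inv, sq]
  have hCS : (inner ℂ u y₀ : ℂ).re ≤ ‖u‖ * ‖y₀‖ := re_inner_le_norm (𝕜 := ℂ) u y₀
  have hnorm : ‖((l : ℂ))⁻¹ • u‖ = l⁻¹ * ‖u‖ := by
    rw [norm_smul, norm_inv, Complex.norm_real, Real.norm_eq_abs, abs_of_pos hl]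
  rw [hnorm]
  rcases eq_or_ne ‖u‖ 0 with h0 | h0
  · rw [h0, mul_zero]; exact norm_nonneg _
  · have hupos : 0 < ‖u‖ := lt_of_le_of_ne (norm_nonneg _) (Ne.symm h0)
    have : l⁻¹ * ‖u‖ ^ 2 ≤ ‖u‖ * ‖y₀‖ := by
      calc l⁻¹ * ‖u‖ ^ 2 = (inner ℂ u (((l : ℂ))⁻¹ • u) : ℂ).re := hLHS.symm
        _ ≤ (inner ℂ u y₀ : ℂ).re := hkey
        _ ≤ ‖u‖ * ‖y₀‖ := hCS
    nlinarith [sq_nonneg ‖u‖]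
end

section
/- Let G_c : D(G_c) ⊆ H₀ → H₁ and D_c : D(D_c) ⊆ H₁ → H₀ be densely defined closed linear operators with G_c ⊆ −D_c*, and set G := −D_c*, D := −G_c*. Then the Hilbert space H¹(|G|+i) (the domain D(G) with graph inner product) decomposes orthogonally as H¹(|G|+i) = H¹(|G_c|+i) ⊕ BD(G), where BD(G) := D(G_c)^⊥ (orthogonal complement taken in H¹(|G|+i)), and moreover BD(G) equals the kernel N(1 − DG) = {u ∈ D(G) : Gu ∈ D(D) and DGu = u}. -/
noncomputable section

/-- The graph inner product `⟨x,y⟩ + ⟨Tx,Ty⟩` on the domain of a partially defined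
operator `T` (the inner product of `H¹(|T|+i)`). -/
def gip {E F : Type*} [NormedAddCommGroup E] [InnerProductSpace ℂ E]
    [NormedAddCommGroup F] [InnerProductSpace ℂ F]
    (T : E →ₗ.[ℂ] F) (x y : T.domain) : ℂ :=
  (inner ℂ (x : E) (y : E) : ℂ) + (inner ℂ (T x) (T y) : ℂ)

/-- The boundary data space `BD(T) = D(T_c)^⊥`, the orthogonal complement of the
domain of `T_c` inside the domain of `T` with respect to the graph inner product. -/
def BD {E F : Type*} [NormedAddCommGroup E] [InnerProductSpace ℂ E]
    [NormedAddCommGroup F] [InnerProductSpace ℂ F]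
    (Tc T : E →ₗ.[ℂ] F) : Set T.domain :=
  {u | ∀ v : T.domain, (v : E) ∈ Tc.domain → gip T v u = 0}

/-- The kernel `N(1 - ST) = {u ∈ D(T) : Tu ∈ D(S), S(Tu) = u}`. -/
def NBD {E F : Type*} [NormedAddCommGroup E] [InnerProductSpace ℂ E]
    [NormedAddCommGroup F] [InnerProductSpace ℂ F]
    (T : E →ₗ.[ℂ] F) (S : F →ₗ.[ℂ] E) : Set T.domain :=
  {u | ∃ h : T u ∈ S.domain, S ⟨T u, h⟩ = (u : E)}

end

noncomputable section BDAux
namespace BDAux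

set_option linter.unusedSectionVars false

variable {H₀ H₁ : Type*}
    [NormedAddCommGroup H₀] [InnerProductSpace ℂ H₀] [CompleteSpace H₀]
    [NormedAddCommGroup H₁] [InnerProductSpace ℂ H₁] [CompleteSpace H₁]

/-- Embedding of `D(G)` into `WithLp 2 (H₀ × H₁)` via the graph. -/
def eL (G : H₀ →ₗ.[ℂ] H₁) : G.domain →ₗ[ℂ] WithLp 2 (H₀ × H₁) :=
  (WithLp.linearEquiv 2 ℂ (H₀ × H₁)).symm.toLinearMap.comp (G.domain.subtype.prod G.toFun)

theorem gip_eq (G : H₀ →ₗ.[ℂ] H₁) (v u : G.domain) :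
    gip G v u = inner ℂ (eL G v) (eL G u) := rfl

variable {Gc G : H₀ →ₗ.[ℂ] H₁}

/-- The graph of `Gc` as a submodule of `WithLp 2 (H₀ × H₁)`. -/
def M (Gc : H₀ →ₗ.[ℂ] H₁) : Submodule ℂ (WithLp 2 (H₀ × H₁)) :=
  Gc.graph.comap
    ((WithLp.prodContinuousLinearEquiv 2 ℂ H₀ H₁ : WithLp 2 (H₀ × H₁) ≃ₗ[ℂ] H₀ × H₁) :
      WithLp 2 (H₀ × H₁) →ₗ[ℂ] H₀ × H₁)

theorem M_isClosed (h : Gc.IsClosed) : IsClosed ((M Gc : Set (WithLp 2 (H₀ × H₁)))) :=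
  h.preimage (WithLp.prodContinuousLinearEquiv 2 ℂ H₀ H₁).continuous

theorem mem_M (hle : Gc ≤ G) (x : G.domain) (hx : (x : H₀) ∈ Gc.domain) : eL G x ∈ M Gc := by
  have : ((x : H₀), G x) ∈ Gc.graph := by
    have : Gc ⟨(x : H₀), hx⟩ = G x := hle.2 rfl
    simpa [← this] using Gc.mem_graph ⟨(x : H₀), hx⟩
  exact this

theorem M_elim (hle : Gc ≤ G) (w : WithLp 2 (H₀ × H₁)) (hw : w ∈ M Gc) :
    ∃ x : G.domain, (x : H₀) ∈ Gc.domain ∧ eL G x = w := by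
  have hw' : (WithLp.prodContinuousLinearEquiv 2 ℂ H₀ H₁) w ∈ Gc.graph := hw
  rw [LinearPMap.mem_graph_iff] at hw'
  obtain ⟨y, hy1, hy2⟩ := hw'
  refine ⟨⟨(y : H₀), hle.1 y.2⟩, y.2, ?_⟩
  have hGy : Gc y = G ⟨(y : H₀), hle.1 y.2⟩ := hle.2 rfl
  apply (WithLp.prodContinuousLinearEquiv 2 ℂ H₀ H₁).injective
  show (((y : H₀) : H₀), G ⟨(y : H₀), hle.1 y.2⟩) = _
  rw [← hGy]
  exact Prod.ext hy1 hy2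

theorem eL_injective (G : H₀ →ₗ.[ℂ] H₁) : Function.Injective (eL G) := by
  intro x y h
  have := congrArg (fun w => ((WithLp.prodContinuousLinearEquiv 2 ℂ H₀ H₁) w).1) h
  exact Subtype.ext this

theorem part1 (hGc_closed : Gc.IsClosed) (hle : Gc ≤ G) :
    ∀ u : G.domain, ∃! p : G.domain × G.domain,
       (p.1 : H₀) ∈ Gc.domain ∧ p.2 ∈ BD Gc G ∧ u = p.1 + p.2 := by
  haveI : CompleteSpace (M Gc) := (M_isClosed hGc_closed).completeSpace_coe
  intro u
  obtain ⟨a, haGc, hae⟩ := M_elim hle _ ((M Gc).orthogonalProjectionOnto (eL G u)).2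
  have hsub : eL G u - eL G a ∈ (M Gc)ᗮ := by
    rw [hae]; exact Submodule.sub_starProjection_mem_orthogonal (eL G u)
  refine ⟨(a, u - a), ⟨haGc, ?_, by rw [add_sub_cancel]⟩, ?_⟩
  · intro v hv
    rw [gip_eq, map_sub]
    exact (Submodule.mem_orthogonal _ _).1 hsub _ (mem_M hle v hv)
  · rintro ⟨a', b'⟩ ⟨ha', hb', huab⟩
    have hb'o : eL G b' ∈ (M Gc)ᗮ := by
      rw [Submodule.mem_orthogonal]
      intro w hw
      obtain ⟨v, hv, rfl⟩ := M_elim hle w hw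
      rw [← gip_eq]
      exact hb' v hv
    have hproj : ((M Gc).orthogonalProjectionOnto (eL G u) : WithLp 2 (H₀ × H₁)) = eL G a' :=
      Submodule.eq_starProjection_of_mem_orthogonal' (mem_M hle a' ha') hb'o
        (by rw [huab, map_add])
    have haa : a' = a := eL_injective G (by rw [← hproj, ← hae])
    have hbb : b' = u - a := by rw [← haa]; rw [huab]; abel
    simp [haa, hbb]

theorem part2 {D : H₁ →ₗ.[ℂ] H₀} (hGc_dense : Dense (Gc.domain : Set H₀))
    (hle : Gc ≤ G) (hD : D = -Gc.adjoint) :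
    BD Gc G = NBD G D := by
  subst hD
  ext u
  constructor
  · intro h
    have key : ∀ x : Gc.domain, (inner ℂ (-(u : H₀)) (x : H₀) : ℂ) = inner ℂ (G u) (Gc x) := by
      intro x
      have h0 := h ⟨(x : H₀), hle.1 x.2⟩ x.2
      have hGx : Gc x = G ⟨(x : H₀), hle.1 x.2⟩ := hle.2 rfl
      unfold gip at h0
      rw [← hGx] at h0
      have h1 : (inner ℂ (Gc x) (G u) : ℂ) = -(inner ℂ (x : H₀) (u : H₀) : ℂ) := by
        linear_combination h0
      rw [inner_neg_left, ← inner_conj_symm (G u) (Gc x), h1]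
      rw [map_neg, inner_conj_symm]
    have hmem : G u ∈ Gc.adjoint.domain :=
      LinearPMap.mem_adjoint_domain_of_exists _ ⟨-(u : H₀), key⟩
    refine ⟨hmem, ?_⟩
    have hval : Gc.adjoint ⟨G u, hmem⟩ = -(u : H₀) :=
      LinearPMap.adjoint_apply_eq hGc_dense _ key
    show (-Gc.adjoint) ⟨G u, hmem⟩ = (u : H₀)
    rw [LinearPMap.neg_apply]
    show -(Gc.adjoint ⟨G u, hmem⟩) = (u : H₀)
    rw [hval, neg_neg]
  · rintro ⟨hmem, hval⟩
    intro v hv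
    have hval' : Gc.adjoint ⟨G u, hmem⟩ = -(u : H₀) := by
      have h := LinearPMap.neg_apply Gc.adjoint ⟨G u, hmem⟩
      rw [hval] at h
      exact neg_eq_iff_eq_neg.mp h.symm
    have formal := LinearPMap.adjoint_isFormalAdjoint hGc_dense ⟨G u, hmem⟩ ⟨(v : H₀), hv⟩
    rw [hval'] at formal
    have hGv : Gc ⟨(v : H₀), hv⟩ = G v := hle.2 rfl
    rw [hGv] at formal
    have h2 : (inner ℂ (G v) (G u) : ℂ) = -(inner ℂ (v : H₀) (u : H₀) : ℂ) := by
      have := congrArg (starRingEnd ℂ) formal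
      simp only [inner_conj_symm, inner_neg_left, map_neg] at this
      exact this.symm
    unfold gip
    rw [h2]; ring

end BDAux
end BDAux

/-- Decomposition `H¹(|G|+i) = H¹(|G_c|+i) ⊕ BD(G)` and the identification
`BD(G) = N(1 - DG)`, for `G := -D_c*`, `D := -G_c*`. -/
theorem bd_decomposition {H₀ H₁ : Type*}
    [NormedAddCommGroup H₀] [InnerProductSpace ℂ H₀] [CompleteSpace H₀]
    [NormedAddCommGroup H₁] [InnerProductSpace ℂ H₁] [CompleteSpace H₁]
    (Gc : H₀ →ₗ.[ℂ] H₁) (Dc : H₁ →ₗ.[ℂ] H₀)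
    (hGc_dense : Dense (Gc.domain : Set H₀)) (hDc_dense : Dense (Dc.domain : Set H₁))
    (hGc_closed : Gc.IsClosed) (hDc_closed : Dc.IsClosed)
    (hle : Gc ≤ -Dc.adjoint)
    (G : H₀ →ₗ.[ℂ] H₁) (D : H₁ →ₗ.[ℂ] H₀)
    (hG : G = -Dc.adjoint) (hD : D = -Gc.adjoint) :
    (∀ u : G.domain, ∃! p : G.domain × G.domain,
       (p.1 : H₀) ∈ Gc.domain ∧ p.2 ∈ BD Gc G ∧ u = p.1 + p.2) ∧
    BD Gc G = NBD G D := by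
  have hle' : Gc ≤ G := by rw [hG]; exact hle
  exact ⟨BDAux.part1 hGc_closed hle', BDAux.part2 hGc_dense hle' hD⟩
end

section
/- Let H₀, H₁ be Hilbert spaces, G_c ⊆ −D_c* densely defined closed operators, G := −D_c*, D := −G_c*, with boundary data spaces BD(G), BD(D), projections π_{BD(G)}, π_{BD(D)} from H¹(|G|+i) and H¹(|D|+i), and unitary Ď : BD(D) → BD(G). Then for every (u,v) ∈ D(G) × D(D): Re( ⟨Dv, u⟩_{H₀} + ⟨Gu, v⟩_{H₁} ) = Re ⟨π_{BD(G)}u, Ď π_{BD(D)}v⟩_{BD(G)}. -/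
private theorem bd_inner_product_identity' {H₀ H₁ : Type*}
    [NormedAddCommGroup H₀] [InnerProductSpace ℂ H₀] [CompleteSpace H₀]
    [NormedAddCommGroup H₁] [InnerProductSpace ℂ H₁] [CompleteSpace H₁]
    (Gc : H₀ →ₗ.[ℂ] H₁) (Dc : H₁ →ₗ.[ℂ] H₀)
    (hGc_dense : Dense (Gc.domain : Set H₀)) (hDc_dense : Dense (Dc.domain : Set H₁))
    (hle : Gc ≤ -Dc.adjoint)
    (uc ub : (-Dc.adjoint).domain) (vc vb : (-Gc.adjoint).domain)
    (huc : (uc : H₀) ∈ Gc.domain)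
    (hvc : (vc : H₁) ∈ Dc.domain) :
    ((inner ℂ ((-Gc.adjoint) (vc + vb)) ((uc + ub : (-Dc.adjoint).domain) : H₀) : ℂ) +
      (inner ℂ ((-Dc.adjoint) (uc + ub)) ((vc + vb : (-Gc.adjoint).domain) : H₁) : ℂ)).re =
      ((inner ℂ ((-Gc.adjoint) vb) ((ub : H₀)) : ℂ) +
        (inner ℂ ((-Dc.adjoint) ub) ((vb : H₁)) : ℂ)).re := by
  have hfaG := LinearPMap.adjoint_isFormalAdjoint hGc_dense
  have hfaD := LinearPMap.adjoint_isFormalAdjoint hDc_dense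
  -- Dc ≤ -Gc.adjoint
  have hGcFA : Gc.IsFormalAdjoint (-Dc) := by
    intro x y
    have hx : Gc x = -(Dc.adjoint ⟨(x : H₀), hle.1 x.2⟩) := by
      have := hle.2 (x := x) (y := ⟨(x : H₀), hle.1 x.2⟩) rfl
      rwa [LinearPMap.neg_apply] at this
    rw [hx, LinearPMap.neg_apply, inner_neg_left, inner_neg_right, neg_inj]
    exact hfaD ⟨(x : H₀), hle.1 x.2⟩ y
  have hDle : Dc ≤ -Gc.adjoint := by
    have h1 : -Dc ≤ Gc.adjoint := hGcFA.le_adjoint hGc_dense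
    refine ⟨fun x hx => h1.1 hx, fun x y hxy => ?_⟩
    have := h1.2 (x := x) (y := y) hxy
    rw [LinearPMap.neg_apply] at this
    rw [LinearPMap.neg_apply, ← this, neg_neg]
  set w : H₁ := Gc ⟨(uc : H₀), huc⟩ with hw
  set z : H₀ := Dc ⟨(vc : H₁), hvc⟩ with hz
  have hGuc : (-Dc.adjoint) uc = w := (hle.2 (x := ⟨(uc : H₀), huc⟩) (y := uc) rfl).symm
  have hDvc : (-Gc.adjoint) vc = z := (hDle.2 (x := ⟨(vc : H₁), hvc⟩) (y := vc) rfl).symm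
  have hA : ∀ y : (-Gc.adjoint).domain,
      (inner ℂ ((-Gc.adjoint) y) ((uc : H₀)) : ℂ) = -(starRingEnd ℂ) (inner ℂ w (y : H₁) : ℂ) := by
    intro y
    rw [LinearPMap.neg_apply, inner_neg_left, inner_conj_symm]
    congr 1
    exact hfaG y ⟨(uc : H₀), huc⟩
  have hB : ∀ x : (-Dc.adjoint).domain,
      (inner ℂ ((-Dc.adjoint) x) ((vc : H₁)) : ℂ) = -(starRingEnd ℂ) (inner ℂ z (x : H₀) : ℂ) := by
    intro x
    rw [LinearPMap.neg_apply, inner_neg_left, inner_conj_symm]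
    congr 1
    exact hfaD x ⟨(vc : H₁), hvc⟩
  have hwvc : (inner ℂ w ((vc : H₁)) : ℂ) = -(starRingEnd ℂ) (inner ℂ z ((uc : H₀)) : ℂ) := by
    rw [← hGuc]; exact hB uc
  have expand :
      ((inner ℂ ((-Gc.adjoint) (vc + vb)) ((uc + ub : (-Dc.adjoint).domain) : H₀) : ℂ) +
        (inner ℂ ((-Dc.adjoint) (uc + ub)) ((vc + vb : (-Gc.adjoint).domain) : H₁) : ℂ)) =
      ((inner ℂ ((-Gc.adjoint) vb) ((ub : H₀)) : ℂ) +
        (inner ℂ ((-Dc.adjoint) ub) ((vb : H₁)) : ℂ)) +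
      (((inner ℂ z ((uc : H₀)) : ℂ) - (starRingEnd ℂ) (inner ℂ z ((uc : H₀)) : ℂ)) +
        ((inner ℂ w ((vb : H₁)) : ℂ) - (starRingEnd ℂ) (inner ℂ w ((vb : H₁)) : ℂ)) +
        ((inner ℂ z ((ub : H₀)) : ℂ) - (starRingEnd ℂ) (inner ℂ z ((ub : H₀)) : ℂ))) := by
    rw [LinearPMap.map_add, LinearPMap.map_add, Submodule.coe_add, Submodule.coe_add,
      inner_add_left, inner_add_left, inner_add_right, inner_add_right, inner_add_right,
      inner_add_right, hDvc, hGuc, hA vb, hB ub, hwvc]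
    ring
  rw [expand]
  simp only [Complex.add_re, Complex.sub_re, Complex.conj_re]
  ring

/-- The abstract integration-by-parts identity: for `(u,v) ∈ D(G) × D(D)` with graph
orthogonal decompositions `u = u_c + u_b` (`u_c ∈ D(G_c)`, `u_b ∈ BD(G)`) and
`v = v_c + v_b` (`v_c ∈ D(D_c)`, `v_b ∈ BD(D)`),
`Re(⟨Dv,u⟩ + ⟨Gu,v⟩) = Re ⟨π_{BD(G)}u, Ď π_{BD(D)}v⟩_{BD(G)}
 = Re(⟨D v_b, u_b⟩ + ⟨G u_b, v_b⟩)`. -/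
theorem bd_inner_product_identity {H₀ H₁ : Type*}
    [NormedAddCommGroup H₀] [InnerProductSpace ℂ H₀] [CompleteSpace H₀]
    [NormedAddCommGroup H₁] [InnerProductSpace ℂ H₁] [CompleteSpace H₁]
    (Gc : H₀ →ₗ.[ℂ] H₁) (Dc : H₁ →ₗ.[ℂ] H₀)
    (hGc_dense : Dense (Gc.domain : Set H₀)) (hDc_dense : Dense (Dc.domain : Set H₁))
    (hGc_closed : Gc.IsClosed) (hDc_closed : Dc.IsClosed)
    (hle : Gc ≤ -Dc.adjoint)
    (G : H₀ →ₗ.[ℂ] H₁) (D : H₁ →ₗ.[ℂ] H₀)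
    (hG : G = -Dc.adjoint) (hD : D = -Gc.adjoint)
    (u uc ub : G.domain) (v vc vb : D.domain)
    (huc : (uc : H₀) ∈ Gc.domain) (hub : ub ∈ BD Gc G) (hu : u = uc + ub)
    (hvc : (vc : H₁) ∈ Dc.domain) (hvb : vb ∈ BD Dc D) (hv : v = vc + vb) :
    ((inner ℂ (D v) (u : H₀) : ℂ) + (inner ℂ (G u) (v : H₁) : ℂ)).re =
      ((inner ℂ (D vb) (ub : H₀) : ℂ) + (inner ℂ (G ub) (vb : H₁) : ℂ)).re := by
  subst hG hD hu hv
  exact bd_inner_product_identity' Gc Dc hGc_dense hDc_dense hle uc ub vc vb huc hvc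
end

section
/- In the setting of two densely defined closed operators G_c ⊆ −D_c* with G := −D_c*, D := −G_c*, let A be a (possibly nonlinear) restriction of the block operator (u,v) ↦ (Dv, Gu) on H₀ ⊕ H₁. If the domain of A equals {(u,v) ∈ D(G) × D(D) : (π_{BD(G)}u, Ď π_{BD(D)}v) ∈ h} for some maximal monotone relation h ⊆ BD(G) ⊕ BD(G), then A is maximal monotone on H₀ ⊕ H₁. -/
noncomputable section

/-- The inner product of the Hilbert space direct sum `H₀ ⊕ H₁`. -/
def ipProd {H₀ H₁ : Type*} [NormedAddCommGroup H₀] [InnerProductSpace ℂ H₀]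
    [NormedAddCommGroup H₁] [InnerProductSpace ℂ H₁]
    (p q : H₀ × H₁) : ℂ :=
  (inner ℂ p.1 q.1 : ℂ) + (inner ℂ p.2 q.2 : ℂ)

/-- The block operator matrix `(u,v) ↦ (Dv, Gu)` as a relation on `H₀ ⊕ H₁`. -/
def blockRel {H₀ H₁ : Type*} [NormedAddCommGroup H₀] [InnerProductSpace ℂ H₀]
    [NormedAddCommGroup H₁] [InnerProductSpace ℂ H₁]
    (G : H₀ →ₗ.[ℂ] H₁) (D : H₁ →ₗ.[ℂ] H₀) :
    Set ((H₀ × H₁) × (H₀ × H₁)) :=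
  {p | ∃ (hu : p.1.1 ∈ G.domain) (hv : p.1.2 ∈ D.domain),
        p.2.1 = D ⟨p.1.2, hv⟩ ∧ p.2.2 = G ⟨p.1.1, hu⟩}

/-- `h` is a maximal monotone relation on the boundary data space `BDset ⊆ D(G)`
with respect to the graph inner product. -/
def MaxMonBD {H₀ H₁ : Type*} [NormedAddCommGroup H₀] [InnerProductSpace ℂ H₀]
    [NormedAddCommGroup H₁] [InnerProductSpace ℂ H₁]
    (G : H₀ →ₗ.[ℂ] H₁) (BDset : Set G.domain)
    (h : Set (G.domain × G.domain)) : Prop :=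
  h ⊆ BDset ×ˢ BDset ∧ MonotoneRelWRT (gip G) h ∧
    ∀ h' : Set (G.domain × G.domain), h' ⊆ BDset ×ˢ BDset →
      MonotoneRelWRT (gip G) h' → h ⊆ h' → h' = h

/-- The boundary condition `(π_{BD(G)} u, Ď π_{BD(D)} v) ∈ h` for a pair
`p = (u,v) ∈ D(G) × D(D)`, expressed via graph-orthogonal decompositions. -/
def DomCond {H₀ H₁ : Type*} [NormedAddCommGroup H₀] [InnerProductSpace ℂ H₀]
    [NormedAddCommGroup H₁] [InnerProductSpace ℂ H₁]
    (Gc G : H₀ →ₗ.[ℂ] H₁) (Dc D : H₁ →ₗ.[ℂ] H₀)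
    (h : Set (G.domain × G.domain)) (p : H₀ × H₁) : Prop :=
  ∃ (hu : p.1 ∈ G.domain) (hv : p.2 ∈ D.domain) (uc ub : G.domain)
    (vc vb : D.domain) (w : G.domain),
    (uc : H₀) ∈ Gc.domain ∧ ub ∈ BD Gc G ∧ (⟨p.1, hu⟩ : G.domain) = uc + ub ∧
    (vc : H₁) ∈ Dc.domain ∧ vb ∈ BD Dc D ∧ (⟨p.2, hv⟩ : D.domain) = vc + vb ∧
    (w : H₀) = D vb ∧ (ub, w) ∈ h

end
section Aux

open LinearPMap Complex

local notation "⟪" x ", " y "⟫" => @inner ℂ _ _ x y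

variable {H₀ H₁ : Type*}
    [NormedAddCommGroup H₀] [InnerProductSpace ℂ H₀]
    [NormedAddCommGroup H₁] [InnerProductSpace ℂ H₁]

lemma BD_zero (Tc T : H₀ →ₗ.[ℂ] H₁) : (0 : T.domain) ∈ BD Tc T := by
  intro v _
  simp [gip]

lemma BD_sub {Tc T : H₀ →ₗ.[ℂ] H₁} {x y : T.domain}
    (hx : x ∈ BD Tc T) (hy : y ∈ BD Tc T) : x - y ∈ BD Tc T := by
  intro v hv
  have h1 := hx v hv
  have h2 := hy v hv
  simp only [gip] at *
  rw [Submodule.coe_sub, LinearPMap.map_sub, inner_sub_right, inner_sub_right]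
  linear_combination h1 - h2

/-- A linear function of `t` bounded above is constant. -/
lemma slope_zero {c d : ℝ} (hle : ∀ t : ℝ, t * d ≤ c) : d = 0 := by
  by_contra hd
  have h1 := hle ((c + 1) / d)
  rw [div_mul_cancel₀ _ hd] at h1
  linarith

lemma star_eq {α β : ℂ} {C : ℝ} (hb : ∀ z : ℂ, ((starRingEnd ℂ) z * α + z * β).re ≤ C) :
    β = -(starRingEnd ℂ) α := by
  have key : ∀ z : ℂ, ((starRingEnd ℂ) z * α + z * β).re = 0 := by
    intro z
    have : ∀ t : ℝ, t * ((starRingEnd ℂ) z * α + z * β).re ≤ C := by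
      intro t
      have := hb ((t : ℂ) * z)
      rw [map_mul, Complex.conj_ofReal] at this
      calc t * ((starRingEnd ℂ) z * α + z * β).re
          = ((t : ℂ) * ((starRingEnd ℂ) z * α + z * β)).re := by
            rw [Complex.re_ofReal_mul]
        _ ≤ C := by rw [mul_add, ← mul_assoc, ← mul_assoc]; exact this
    exact slope_zero this
  have h1 := key 1
  have hI := key Complex.I
  simp only [map_one, one_mul, Complex.add_re] at h1
  rw [Complex.conj_I] at hI
  simp only [Complex.add_re, Complex.neg_re, Complex.mul_re, Complex.I_re, Complex.I_im,
    Complex.neg_im] at hI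
  apply Complex.ext
  · simp only [Complex.neg_re, Complex.conj_re]; linarith
  · simp only [Complex.neg_im, Complex.conj_im]; linarith

end Aux

section Aux2
variable {H₀ H₁ : Type*}
    [NormedAddCommGroup H₀] [InnerProductSpace ℂ H₀]
    [NormedAddCommGroup H₁] [InnerProductSpace ℂ H₁]

lemma complex_inner_re_symm {E : Type*} [NormedAddCommGroup E] [InnerProductSpace ℂ E]
    (x y : E) : (inner ℂ x y : ℂ).re = (inner ℂ y x : ℂ).re := by
  rw [← inner_conj_symm, Complex.conj_re]

lemma gip_sub_swap (T : H₀ →ₗ.[ℂ] H₁) (x y a b : T.domain) :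
    gip T (x - y) (a - b) = gip T (y - x) (b - a) := by
  have h1 : y - x = -(x - y) := by abel
  have h2 : b - a = -(a - b) := by abel
  simp only [gip, h1, h2, Submodule.coe_neg, LinearPMap.map_neg, inner_neg_neg]

end Aux2
section Ops
set_option linter.unusedSectionVars false
set_option linter.unusedVariables false

open LinearPMap Complex

local notation "⟪" x ", " y "⟫" => @inner ℂ _ _ x y

variable {H₀ H₁ : Type*}
    [NormedAddCommGroup H₀] [InnerProductSpace ℂ H₀] [CompleteSpace H₀]
    [NormedAddCommGroup H₁] [InnerProductSpace ℂ H₁] [CompleteSpace H₁]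
    {Gc G : H₀ →ₗ.[ℂ] H₁} {Dc D : H₁ →ₗ.[ℂ] H₀}

lemma le_GcG (hle : Gc ≤ -Dc.adjoint) (hG : G = -Dc.adjoint) : Gc ≤ G := hG ▸ hle

lemma pairG (hDc_dense : Dense (Dc.domain : Set H₁)) (hG : G = -Dc.adjoint)
    (u : G.domain) (y : Dc.domain) :
    ⟪G u, (↑y : H₁)⟫ = -⟪(↑u : H₀), Dc y⟫ := by
  subst hG
  have h1 : (-Dc.adjoint) u = -(Dc.adjoint ⟨↑u, u.2⟩) := rfl
  rw [h1, inner_neg_left, LinearPMap.adjoint_isFormalAdjoint hDc_dense ⟨↑u, u.2⟩ y]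

lemma pairD (hGc_dense : Dense (Gc.domain : Set H₀)) (hD : D = -Gc.adjoint)
    (v : D.domain) (x : Gc.domain) :
    ⟪D v, (↑x : H₀)⟫ = -⟪(↑v : H₁), Gc x⟫ := by
  subst hD
  have h1 : (-Gc.adjoint) v = -(Gc.adjoint ⟨↑v, v.2⟩) := rfl
  rw [h1, inner_neg_left, LinearPMap.adjoint_isFormalAdjoint hGc_dense ⟨↑v, v.2⟩ x]

lemma pairGc (hDc_dense : Dense (Dc.domain : Set H₁)) (hle : Gc ≤ -Dc.adjoint)
    (x : Gc.domain) (y : Dc.domain) :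
    ⟪Gc x, (↑y : H₁)⟫ = -⟪(↑x : H₀), Dc y⟫ := by
  have h2 : Gc x = (-Dc.adjoint) ⟨↑x, hle.1 x.2⟩ := hle.2 rfl
  rw [h2]
  exact pairG hDc_dense rfl _ y

lemma le_DcD (hGc_dense : Dense (Gc.domain : Set H₀)) (hDc_dense : Dense (Dc.domain : Set H₁))
    (hle : Gc ≤ -Dc.adjoint) (hD : D = -Gc.adjoint) : Dc ≤ D := by
  subst hD
  constructor
  · intro y hy
    refine mem_adjoint_domain_of_exists _ ⟨-(Dc ⟨y, hy⟩), fun x => ?_⟩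
    have h := congrArg (starRingEnd ℂ) (pairGc hDc_dense hle x ⟨y, hy⟩)
    rw [_root_.map_neg, inner_conj_symm, inner_conj_symm] at h
    rw [inner_neg_left, ← h]
  · intro y y' hyy'
    have hval : Gc.adjoint ⟨↑y', y'.2⟩ = -(Dc y) := by
      refine adjoint_apply_eq hGc_dense _ (fun x => ?_)
      have h := congrArg (starRingEnd ℂ) (pairGc hDc_dense hle x y)
      rw [_root_.map_neg, inner_conj_symm, inner_conj_symm] at h
      rw [inner_neg_left, ← h, ← hyy']
    have h2 : (-Gc.adjoint) y' = -(Gc.adjoint ⟨↑y', y'.2⟩) := rfl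
    rw [h2, hval, neg_neg]

lemma pairDc (hGc_dense : Dense (Gc.domain : Set H₀)) (hDc_dense : Dense (Dc.domain : Set H₁))
    (hle : Gc ≤ -Dc.adjoint) (y : Dc.domain) (x : Gc.domain) :
    ⟪Dc y, (↑x : H₀)⟫ = -⟪(↑y : H₁), Gc x⟫ := by
  have hld := le_DcD hGc_dense hDc_dense hle (D := -Gc.adjoint) rfl
  have h2 : Dc y = (-Gc.adjoint) ⟨↑y, hld.1 y.2⟩ := hld.2 rfl
  rw [h2]
  exact pairD hGc_dense rfl _ x

lemma beta_left (hGc_dense : Dense (Gc.domain : Set H₀)) (hle : Gc ≤ -Dc.adjoint)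
    (hG : G = -Dc.adjoint) (hD : D = -Gc.adjoint)
    (u : G.domain) (hu : (↑u : H₀) ∈ Gc.domain) (v : D.domain) :
    ⟪(↑u : H₀), D v⟫ + ⟪G u, (↑v : H₁)⟫ = 0 := by
  have h1 := congrArg (starRingEnd ℂ) (pairD hGc_dense hD v ⟨↑u, hu⟩)
  rw [_root_.map_neg, inner_conj_symm, inner_conj_symm] at h1
  have h2 : Gc ⟨↑u, hu⟩ = G u := (le_GcG hle hG).2 rfl
  rw [h1, h2]
  ring

lemma beta_right (hGc_dense : Dense (Gc.domain : Set H₀)) (hDc_dense : Dense (Dc.domain : Set H₁))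
    (hle : Gc ≤ -Dc.adjoint) (hG : G = -Dc.adjoint) (hD : D = -Gc.adjoint)
    (u : G.domain) (v : D.domain) (hv : (↑v : H₁) ∈ Dc.domain) :
    ⟪(↑u : H₀), D v⟫ + ⟪G u, (↑v : H₁)⟫ = 0 := by
  have h1 := pairG hDc_dense hG u ⟨↑v, hv⟩
  have h2 : Dc ⟨↑v, hv⟩ = D v := (le_DcD hGc_dense hDc_dense hle hD).2 rfl
  rw [h1, h2]
  ring

lemma BD_D_mem (hGc_dense : Dense (Gc.domain : Set H₀)) (hDc_dense : Dense (Dc.domain : Set H₁))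
    (hle : Gc ≤ -Dc.adjoint) (hG : G = -Dc.adjoint) (hD : D = -Gc.adjoint)
    {vb : D.domain} (hvb : vb ∈ BD Dc D) :
    ∃ hm : (D vb) ∈ G.domain, G ⟨D vb, hm⟩ = (↑vb : H₁) := by
  have hld := le_DcD hGc_dense hDc_dense hle hD
  have hkey : ∀ y : Dc.domain, ⟪(-(↑vb) : H₁), (↑y : H₁)⟫ = ⟪D vb, Dc y⟫ := by
    intro y
    have h0 := hvb ⟨↑y, hld.1 y.2⟩ y.2
    have hval : D ⟨↑y, hld.1 y.2⟩ = Dc y := (hld.2 (x := y) rfl).symm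
    simp only [gip, hval] at h0
    have h1 : ⟪Dc y, D vb⟫ = -⟪(↑y : H₁), (↑vb : H₁)⟫ := by linear_combination h0
    have h := congrArg (starRingEnd ℂ) h1
    rw [_root_.map_neg, inner_conj_symm, inner_conj_symm] at h
    rw [inner_neg_left, ← h]
  subst hG
  refine ⟨mem_adjoint_domain_of_exists _ ⟨-↑vb, hkey⟩, ?_⟩
  have hval : Dc.adjoint ⟨D vb, mem_adjoint_domain_of_exists _ ⟨-↑vb, hkey⟩⟩ = -↑vb :=
    adjoint_apply_eq hDc_dense _ (fun y => hkey y)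
  show -(Dc.adjoint _) = _
  rw [hval, neg_neg]

lemma BD_G_mem (hGc_dense : Dense (Gc.domain : Set H₀)) (hDc_dense : Dense (Dc.domain : Set H₁))
    (hle : Gc ≤ -Dc.adjoint) (hG : G = -Dc.adjoint) (hD : D = -Gc.adjoint)
    {b : G.domain} (hb : b ∈ BD Gc G) :
    ∃ hm : (G b) ∈ D.domain, D ⟨G b, hm⟩ = (↑b : H₀) := by
  have hlg := le_GcG hle hG
  have hkey : ∀ x : Gc.domain, ⟪(-(↑b) : H₀), (↑x : H₀)⟫ = ⟪G b, Gc x⟫ := by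
    intro x
    have h0 := hb ⟨↑x, hlg.1 x.2⟩ x.2
    have hval : G ⟨↑x, hlg.1 x.2⟩ = Gc x := (hlg.2 (x := x) rfl).symm
    simp only [gip, hval] at h0
    have h1 : ⟪Gc x, G b⟫ = -⟪(↑x : H₀), (↑b : H₀)⟫ := by linear_combination h0
    have h := congrArg (starRingEnd ℂ) h1
    rw [_root_.map_neg, inner_conj_symm, inner_conj_symm] at h
    rw [inner_neg_left, ← h]
  subst hD
  refine ⟨mem_adjoint_domain_of_exists _ ⟨-↑b, hkey⟩, ?_⟩
  have hval : Gc.adjoint ⟨G b, mem_adjoint_domain_of_exists _ ⟨-↑b, hkey⟩⟩ = -↑b :=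
    adjoint_apply_eq hGc_dense _ (fun x => hkey x)
  show -(Gc.adjoint _) = _
  rw [hval, neg_neg]

lemma BD_D_BD (hGc_dense : Dense (Gc.domain : Set H₀)) (hDc_dense : Dense (Dc.domain : Set H₁))
    (hle : Gc ≤ -Dc.adjoint) (hG : G = -Dc.adjoint) (hD : D = -Gc.adjoint)
    {vb : D.domain} (hvb : vb ∈ BD Dc D) (w : G.domain) (hw : (↑w : H₀) = D vb) :
    w ∈ BD Gc G := by
  obtain ⟨hm, hval⟩ := BD_D_mem hGc_dense hDc_dense hle hG hD hvb
  have hw' : w = ⟨D vb, hm⟩ := Subtype.ext hw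
  intro φ hφ
  have h1 := congrArg (starRingEnd ℂ) (pairD hGc_dense hD vb ⟨↑φ, hφ⟩)
  rw [_root_.map_neg, inner_conj_symm, inner_conj_symm] at h1
  have h2 : Gc ⟨↑φ, hφ⟩ = G φ := (le_GcG hle hG).2 rfl
  simp only [gip, hw', hval]
  rw [h1, h2]
  ring

lemma BD_G_BD (hGc_dense : Dense (Gc.domain : Set H₀)) (hDc_dense : Dense (Dc.domain : Set H₁))
    (hle : Gc ≤ -Dc.adjoint) (hG : G = -Dc.adjoint) (hD : D = -Gc.adjoint)
    {b : G.domain} (hb : b ∈ BD Gc G) (y : D.domain) (hy : (↑y : H₁) = G b) :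
    y ∈ BD Dc D := by
  obtain ⟨hm, hval⟩ := BD_G_mem hGc_dense hDc_dense hle hG hD hb
  have hy' : y = ⟨G b, hm⟩ := Subtype.ext hy
  intro ψ hψ
  have h1 := congrArg (starRingEnd ℂ) (pairG hDc_dense hG b ⟨↑ψ, hψ⟩)
  rw [_root_.map_neg, inner_conj_symm, inner_conj_symm] at h1
  have h2 : Dc ⟨↑ψ, hψ⟩ = D ψ := (le_DcD hGc_dense hDc_dense hle hD).2 rfl
  simp only [gip, hy', hval]
  rw [h1, h2]
  ring

lemma beta_split (hGc_dense : Dense (Gc.domain : Set H₀)) (hDc_dense : Dense (Dc.domain : Set H₁))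
    (hle : Gc ≤ -Dc.adjoint) (hG : G = -Dc.adjoint) (hD : D = -Gc.adjoint)
    (U Uc Ub W : G.domain) (V Vc Vb : D.domain)
    (hUc : (↑Uc : H₀) ∈ Gc.domain) (hUb : Ub ∈ BD Gc G) (hU : U = Uc + Ub)
    (hVc : (↑Vc : H₁) ∈ Dc.domain) (hVb : Vb ∈ BD Dc D) (hV : V = Vc + Vb)
    (hW : (↑W : H₀) = D Vb) :
    ⟪(↑U : H₀), D V⟫ + ⟪G U, (↑V : H₁)⟫ = gip G Ub W := by
  obtain ⟨hm, hval⟩ := BD_D_mem hGc_dense hDc_dense hle hG hD hVb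
  have hW' : W = ⟨D Vb, hm⟩ := Subtype.ext hW
  have h1 := beta_left hGc_dense hle hG hD Uc hUc V
  have h2 := beta_right hGc_dense hDc_dense hle hG hD Ub Vc hVc
  have expand : ⟪(↑U : H₀), D V⟫ + ⟪G U, (↑V : H₁)⟫
      = (⟪(↑Uc : H₀), D V⟫ + ⟪G Uc, (↑V : H₁)⟫)
        + (⟪(↑Ub : H₀), D Vc⟫ + ⟪G Ub, (↑Vc : H₁)⟫)
        + (⟪(↑Ub : H₀), D Vb⟫ + ⟪G Ub, (↑Vb : H₁)⟫) := by
    subst hU hV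
    simp only [Submodule.coe_add, LinearPMap.map_add, inner_add_left, inner_add_right]
    ring
  rw [expand, h1, h2]
  simp only [gip, hW', hval]
  ring

end Ops
section Decomp
set_option linter.unusedSectionVars false

open LinearPMap Complex

local notation "⟪" x ", " y "⟫" => @inner ℂ _ _ x y

variable {E F : Type*}
    [NormedAddCommGroup E] [InnerProductSpace ℂ E] [CompleteSpace E]
    [NormedAddCommGroup F] [InnerProductSpace ℂ F] [CompleteSpace F]

/-- Graph-orthogonal decomposition of `T.domain` along the closed subspace `Tc.domain`. -/
lemma exists_decomp {Tc T : E →ₗ.[ℂ] F} (hTc : Tc.IsClosed) (hle : Tc ≤ T)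
    (u : T.domain) :
    ∃ uc ub : T.domain, (↑uc : E) ∈ Tc.domain ∧ ub ∈ BD Tc T ∧ u = uc + ub := by
  classical
  set e : (E × F) ≃ₗ[ℂ] WithLp 2 (E × F) := (WithLp.linearEquiv 2 ℂ (E × F)).symm with he
  set K : Submodule ℂ (WithLp 2 (E × F)) := Tc.graph.map (e : (E × F) →ₗ[ℂ] WithLp 2 (E × F))
    with hK
  have hKclosed : IsClosed (K : Set (WithLp 2 (E × F))) := by
    have : (K : Set (WithLp 2 (E × F)))
        = (WithLp.prodContinuousLinearEquiv 2 ℂ E F) ⁻¹' (Tc.graph : Set (E × F)) := by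
      ext z
      simp only [hK, Submodule.map_coe, Set.mem_image, Set.mem_preimage]
      constructor
      · rintro ⟨a, ha, rfl⟩
        exact ha
      · intro hz
        exact ⟨(WithLp.prodContinuousLinearEquiv 2 ℂ E F) z, hz, rfl⟩
    rw [this]
    exact hTc.preimage (WithLp.prodContinuousLinearEquiv 2 ℂ E F).continuous
  have : CompleteSpace K := hKclosed.completeSpace_coe
  obtain ⟨y, hy, z, hz, hxyz⟩ := K.exists_add_mem_mem_orthogonal (e (↑u, T u))
  -- extract the `Tc`-component
  obtain ⟨a, ha, hae⟩ := hy
  obtain ⟨yc, hyc⟩ := Tc.mem_graph_iff'.mp ha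
  set uc : T.domain := ⟨↑yc, hle.1 yc.2⟩ with huc
  have hTuc : T uc = Tc yc := (hle.2 rfl).symm
  refine ⟨uc, u - uc, yc.2, ?_, by abel⟩
  have hzval : z = e (↑(u - uc), T (u - uc)) := by
    have : (a : E × F) = (↑uc, T uc) := by
      rw [hTuc, ← hyc]
    rw [eq_sub_of_add_eq' hxyz.symm, ← hae, this]
    simp only [Submodule.coe_sub, LinearPMap.map_sub]
    rw [show ((↑u - ↑yc, (T u : F) - T uc) : E × F) = (↑u, (T u : F)) - (↑yc, T uc) from rfl]
    exact (_root_.map_sub e _ _).symm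
  intro v hv
  have hvK : e (↑v, T v) ∈ K := by
    refine ⟨(↑v, T v), ?_, rfl⟩
    refine Tc.mem_graph_iff'.mpr ⟨⟨↑v, hv⟩, ?_⟩
    rw [show Tc ⟨↑v, hv⟩ = T v from hle.2 rfl]
  have horth := (Submodule.mem_orthogonal K z).mp hz _ hvK
  rw [hzval] at horth
  have : ⟪(e (↑v, T v) : WithLp 2 (E × F)), e (↑(u - uc), T (u - uc))⟫
      = ⟪(↑v : E), ↑(u - uc)⟫ + ⟪T v, T (u - uc)⟫ := by
    rw [WithLp.prod_inner_apply]
    rfl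
  rw [this] at horth
  exact horth

end Decomp
section Recover
set_option linter.unusedSectionVars false
open LinearPMap Complex
local notation "⟪" x ", " y "⟫" => @inner ℂ _ _ x y
variable {H₀ H₁ : Type*}
    [NormedAddCommGroup H₀] [InnerProductSpace ℂ H₀] [CompleteSpace H₀]
    [NormedAddCommGroup H₁] [InnerProductSpace ℂ H₁] [CompleteSpace H₁]
    {Gc G : H₀ →ₗ.[ℂ] H₁} {Dc D : H₁ →ₗ.[ℂ] H₀}

lemma adjoint_recoverD (hGc_dense : Dense (Gc.domain : Set H₀)) (hD : D = -Gc.adjoint)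
    {v' : H₁} {f' : H₀}
    (hkey : ∀ x : Gc.domain, ⟪v', Gc x⟫ = -(starRingEnd ℂ) ⟪(↑x : H₀), f'⟫) :
    ∃ hm : v' ∈ D.domain, D ⟨v', hm⟩ = f' := by
  subst hD
  have hkey' : ∀ x : Gc.domain, ⟪-f', (↑x : H₀)⟫ = ⟪v', Gc x⟫ := by
    intro x; rw [hkey x, inner_neg_left, inner_conj_symm]
  refine ⟨mem_adjoint_domain_of_exists _ ⟨-f', hkey'⟩, ?_⟩
  have hval : Gc.adjoint ⟨v', mem_adjoint_domain_of_exists _ ⟨-f', hkey'⟩⟩ = -f' :=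
    adjoint_apply_eq hGc_dense _ hkey'
  show -(Gc.adjoint _) = _
  rw [hval, neg_neg]

lemma adjoint_recoverG (hDc_dense : Dense (Dc.domain : Set H₁)) (hG : G = -Dc.adjoint)
    {u' : H₀} {g' : H₁}
    (hkey : ∀ y : Dc.domain, ⟪u', Dc y⟫ = -(starRingEnd ℂ) ⟪(↑y : H₁), g'⟫) :
    ∃ hm : u' ∈ G.domain, G ⟨u', hm⟩ = g' := by
  subst hG
  have hkey' : ∀ y : Dc.domain, ⟪-g', (↑y : H₁)⟫ = ⟪u', Dc y⟫ := by
    intro y; rw [hkey y, inner_neg_left, inner_conj_symm]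
  refine ⟨mem_adjoint_domain_of_exists _ ⟨-g', hkey'⟩, ?_⟩
  have hval : Dc.adjoint ⟨u', mem_adjoint_domain_of_exists _ ⟨-g', hkey'⟩⟩ = -g' :=
    adjoint_apply_eq hDc_dense _ hkey'
  show -(Dc.adjoint _) = _
  rw [hval, neg_neg]

end Recover
/-- If the domain of a restriction `A` of the block operator `(u,v) ↦ (Dv, Gu)` is
given by a maximal monotone boundary relation `h ⊆ BD(G) ⊕ BD(G)`, then `A` is
maximal monotone on `H₀ ⊕ H₁`. -/
theorem bd_maximalMonotone_of_relation {H₀ H₁ : Type*}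
    [NormedAddCommGroup H₀] [InnerProductSpace ℂ H₀] [CompleteSpace H₀]
    [NormedAddCommGroup H₁] [InnerProductSpace ℂ H₁] [CompleteSpace H₁]
    (Gc : H₀ →ₗ.[ℂ] H₁) (Dc : H₁ →ₗ.[ℂ] H₀)
    (hGc_dense : Dense (Gc.domain : Set H₀)) (hDc_dense : Dense (Dc.domain : Set H₁))
    (hGc_closed : Gc.IsClosed) (hDc_closed : Dc.IsClosed)
    (hle : Gc ≤ -Dc.adjoint)
    (G : H₀ →ₗ.[ℂ] H₁) (D : H₁ →ₗ.[ℂ] H₀)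
    (hG : G = -Dc.adjoint) (hD : D = -Gc.adjoint)
    (A : Set ((H₀ × H₁) × (H₀ × H₁))) (hA : A ⊆ blockRel G D)
    (h : Set (G.domain × G.domain)) (hh : MaxMonBD G (BD Gc G) h)
    (hdom : ∀ p : H₀ × H₁, (∃ q, (p, q) ∈ A) ↔ DomCond Gc G Dc D h p) :
    MaximalMonotoneRelWRT ipProd A := by
  classical
  have hlg : Gc ≤ G := le_GcG hle hG
  have hld : Dc ≤ D := le_DcD hGc_dense hDc_dense hle hD
  -- Part 1 : monotonicity of A
  have monoA : MonotoneRelWRT ipProd A := by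
    rintro p₁ hp₁ p₂ hp₂
    obtain ⟨hu₁, hv₁, hq₁1, hq₁2⟩ := hA hp₁
    obtain ⟨hu₂, hv₂, hq₂1, hq₂2⟩ := hA hp₂
    obtain ⟨hu₁', hv₁', uc₁, ub₁, vc₁, vb₁, w₁, huc₁, hub₁, hdec₁, hvc₁, hvb₁, hdecv₁, hw₁, hh₁⟩ :=
      (hdom p₁.1).mp ⟨p₁.2, by rwa [Prod.mk.eta]⟩
    obtain ⟨hu₂', hv₂', uc₂, ub₂, vc₂, vb₂, w₂, huc₂, hub₂, hdec₂, hvc₂, hvb₂, hdecv₂, hw₂, hh₂⟩ :=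
      (hdom p₂.1).mp ⟨p₂.2, by rwa [Prod.mk.eta]⟩
    set U : G.domain := ⟨p₁.1.1, hu₁'⟩ - ⟨p₂.1.1, hu₂'⟩ with hUdef
    set V : D.domain := ⟨p₁.1.2, hv₁'⟩ - ⟨p₂.1.2, hv₂'⟩ with hVdef
    have hq₁1' : p₁.2.1 = D ⟨p₁.1.2, hv₁'⟩ := hq₁1
    have hq₂1' : p₂.2.1 = D ⟨p₂.1.2, hv₂'⟩ := hq₂1
    have hq₁2' : p₁.2.2 = G ⟨p₁.1.1, hu₁'⟩ := hq₁2
    have hq₂2' : p₂.2.2 = G ⟨p₂.1.1, hu₂'⟩ := hq₂2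
    have hsplit := beta_split hGc_dense hDc_dense hle hG hD U (uc₁ - uc₂) (ub₁ - ub₂) (w₁ - w₂)
      V (vc₁ - vc₂) (vb₁ - vb₂)
      (by rw [Submodule.coe_sub]; exact Submodule.sub_mem _ huc₁ huc₂)
      (BD_sub hub₁ hub₂)
      (by rw [hUdef, hdec₁, hdec₂]; abel)
      (by rw [Submodule.coe_sub]; exact Submodule.sub_mem _ hvc₁ hvc₂)
      (BD_sub hvb₁ hvb₂)
      (by rw [hVdef, hdecv₁, hdecv₂]; abel)
      (by rw [Submodule.coe_sub, LinearPMap.map_sub, hw₁, hw₂])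
    have hgoal_eq : ipProd (p₁.1 - p₂.1) (p₁.2 - p₂.2)
        = (inner ℂ (↑U : H₀) (D V) : ℂ) + (inner ℂ (↑V : H₁) (G U) : ℂ) := by
      simp only [ipProd, Prod.fst_sub, Prod.snd_sub, hq₁1', hq₂1', hq₁2', hq₂2']
      rw [show (↑U : H₀) = ↑(⟨p₁.1.1, hu₁'⟩ : G.domain) - ↑(⟨p₂.1.1, hu₂'⟩ : G.domain) from rfl]
      rw [show (↑V : H₁) = ↑(⟨p₁.1.2, hv₁'⟩ : D.domain) - ↑(⟨p₂.1.2, hv₂'⟩ : D.domain) from rfl]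
      rw [hUdef, hVdef, LinearPMap.map_sub, LinearPMap.map_sub]
    have hre : (ipProd (p₁.1 - p₂.1) (p₁.2 - p₂.2)).re
        = (gip G (ub₁ - ub₂) (w₁ - w₂)).re := by
      rw [hgoal_eq, ← hsplit, Complex.add_re, Complex.add_re, complex_inner_re_symm (↑V : H₁) (G U)]
    rw [hre]
    exact hh.2.1 (ub₁, w₁) hh₁ (ub₂, w₂) hh₂
  refine ⟨monoA, fun B hB hAB => Set.Subset.antisymm ?_ hAB⟩
  intro pq hpq
  -- h is nonempty
  have hne : h.Nonempty := by
    rcases Set.eq_empty_or_nonempty h with hemp | hne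
    · exfalso
      have hsingle := hh.2.2 {((0 : G.domain), (0 : G.domain))}
        (by rintro x hx; rw [Set.mem_singleton_iff] at hx; subst hx
            exact Set.mem_prod.mpr ⟨BD_zero _ _, BD_zero _ _⟩)
        (by rintro p hp q hq; rw [Set.mem_singleton_iff] at hp hq; subst hp; subst hq
            simp [gip])
        (by rw [hemp]; exact Set.empty_subset _)
      rw [hemp] at hsingle
      exact Set.singleton_ne_empty _ hsingle
    · exact hne
  -- family of test elements of A
  have testA : ∀ a b : G.domain, (a, b) ∈ h → ∀ (xc : Gc.domain) (yc : Dc.domain),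
      ∃ hGb : (G b : H₁) ∈ D.domain,
      ((((↑a : H₀) + ↑xc, (G b : H₁) + ↑yc) : H₀ × H₁),
        (((↑b : H₀) + Dc yc, (G a : H₁) + Gc xc) : H₀ × H₁)) ∈ A := by
    intro a b hab xc yc
    have hbBD : b ∈ BD Gc G := (hh.1 hab).2
    obtain ⟨hGb, hDGb⟩ := BD_G_mem hGc_dense hDc_dense hle hG hD hbBD
    refine ⟨hGb, ?_⟩
    have hGbBD : (⟨G b, hGb⟩ : D.domain) ∈ BD Dc D :=
      BD_G_BD hGc_dense hDc_dense hle hG hD hbBD _ rfl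
    have hu : ((↑a : H₀) + ↑xc : H₀) ∈ G.domain := G.domain.add_mem a.2 (hlg.1 xc.2)
    have hv : ((G b : H₁) + ↑yc : H₁) ∈ D.domain := D.domain.add_mem hGb (hld.1 yc.2)
    have hdc : DomCond Gc G Dc D h ((↑a : H₀) + ↑xc, (G b : H₁) + ↑yc) := by
      refine ⟨hu, hv, ⟨↑xc, hlg.1 xc.2⟩, a, ⟨↑yc, hld.1 yc.2⟩, ⟨G b, hGb⟩, b,
        xc.2, (hh.1 hab).1, Subtype.ext (add_comm _ _), yc.2, hGbBD,
        Subtype.ext (add_comm _ _), hDGb.symm, hab⟩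
    obtain ⟨q', hq'A⟩ := (hdom _).mpr hdc
    obtain ⟨hu', hv', hq1, hq2⟩ := hA hq'A
    have hvsum : (⟨(G b : H₁) + ↑yc, hv'⟩ : D.domain) = ⟨G b, hGb⟩ + ⟨↑yc, hld.1 yc.2⟩ :=
      Subtype.ext rfl
    have husum : (⟨(↑a : H₀) + ↑xc, hu'⟩ : G.domain) = a + ⟨↑xc, hlg.1 xc.2⟩ :=
      Subtype.ext rfl
    have hq1' : q'.1 = (↑b : H₀) + Dc yc := by
      rw [hq1, hvsum, LinearPMap.map_add, hDGb, ← hld.2 (x := yc) (y := ⟨↑yc, hld.1 yc.2⟩) rfl]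
    have hq2' : q'.2 = (G a : H₁) + Gc xc := by
      rw [hq2, husum, LinearPMap.map_add, ← hlg.2 (x := xc) (y := ⟨↑xc, hlg.1 xc.2⟩) rfl]
    have hqeq : q' = ((↑b : H₀) + Dc yc, (G a : H₁) + Gc xc) := Prod.ext hq1' hq2'
    rwa [← hqeq]
  -- the basic monotonicity inequality against test elements
  have mono_test : ∀ a b : G.domain, (a, b) ∈ h → ∀ (xc : Gc.domain) (yc : Dc.domain),
      0 ≤ ((inner ℂ (pq.1.1 - ↑a - ↑xc) (pq.2.1 - ↑b - Dc yc) : ℂ)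
        + (inner ℂ (pq.1.2 - (G b : H₁) - ↑yc) (pq.2.2 - (G a : H₁) - Gc xc) : ℂ)).re := by
    intro a b hab xc yc
    obtain ⟨hGb, hmemA⟩ := testA a b hab xc yc
    have := hB pq hpq _ (hAB hmemA)
    simpa only [ipProd, Prod.fst_sub, Prod.snd_sub, sub_add_eq_sub_sub] using this
  obtain ⟨⟨a₀, b₀⟩, hab₀⟩ := hne
  obtain ⟨hGb₀, hDGb₀⟩ := BD_G_mem hGc_dense hDc_dense hle hG hD (hh.1 hab₀).2
  -- Step 1a : recover  v ∈ D(D), D v = f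
  have key1 : ∀ xc : Gc.domain,
      (inner ℂ (pq.1.2 - (G b₀ : H₁)) (Gc xc) : ℂ)
        = -(starRingEnd ℂ) (inner ℂ (↑xc : H₀) (pq.2.1 - (↑b₀ : H₀)) : ℂ) := by
    intro xc
    apply star_eq (C := ((inner ℂ (pq.1.1 - (↑a₀ : H₀)) (pq.2.1 - (↑b₀ : H₀)) : ℂ)
      + (inner ℂ (pq.1.2 - (G b₀ : H₁)) (pq.2.2 - (G a₀ : H₁)) : ℂ)).re)
    intro z
    have hmt := mono_test a₀ b₀ hab₀ (z • xc) 0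
    simp only [Submodule.coe_smul, LinearPMap.map_smul, LinearPMap.map_zero, sub_zero,
      Submodule.coe_zero] at hmt
    have hexp : ((inner ℂ (pq.1.1 - (↑a₀ : H₀) - z • (↑xc : H₀)) (pq.2.1 - (↑b₀ : H₀)) : ℂ)
        + (inner ℂ (pq.1.2 - (G b₀ : H₁)) (pq.2.2 - (G a₀ : H₁) - z • (Gc xc : H₁)) : ℂ))
        = ((inner ℂ (pq.1.1 - (↑a₀ : H₀)) (pq.2.1 - (↑b₀ : H₀)) : ℂ)
          + (inner ℂ (pq.1.2 - (G b₀ : H₁)) (pq.2.2 - (G a₀ : H₁)) : ℂ))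
          - ((starRingEnd ℂ) z * (inner ℂ (↑xc : H₀) (pq.2.1 - (↑b₀ : H₀)) : ℂ)
            + z * (inner ℂ (pq.1.2 - (G b₀ : H₁)) (Gc xc) : ℂ)) := by
      simp only [inner_sub_left, inner_sub_right, inner_smul_left, inner_smul_right]
      ring
    rw [hexp] at hmt
    rw [Complex.sub_re] at hmt
    linarith
  obtain ⟨hv'mem, hDv'⟩ := adjoint_recoverD hGc_dense hD key1
  have hvmem : pq.1.2 ∈ D.domain := by
    have heq : pq.1.2 = (pq.1.2 - (G b₀ : H₁)) + (G b₀ : H₁) := by abel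
    rw [heq]; exact D.domain.add_mem hv'mem hGb₀
  have hDvf : ∀ hm : pq.1.2 ∈ D.domain, D ⟨pq.1.2, hm⟩ = pq.2.1 := by
    intro hm
    have hspl : (⟨pq.1.2, hm⟩ : D.domain)
        = ⟨pq.1.2 - (G b₀ : H₁), hv'mem⟩ + ⟨G b₀, hGb₀⟩ := Subtype.ext (by simp)
    rw [hspl, LinearPMap.map_add, hDv', hDGb₀]
    abel
  -- Step 1b : recover  u ∈ D(G), G u = g
  have key2 : ∀ yc : Dc.domain,
      (inner ℂ (pq.1.1 - (↑a₀ : H₀)) (Dc yc) : ℂ)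
        = -(starRingEnd ℂ) (inner ℂ (↑yc : H₁) (pq.2.2 - (G a₀ : H₁)) : ℂ) := by
    intro yc
    apply star_eq (C := ((inner ℂ (pq.1.1 - (↑a₀ : H₀)) (pq.2.1 - (↑b₀ : H₀)) : ℂ)
      + (inner ℂ (pq.1.2 - (G b₀ : H₁)) (pq.2.2 - (G a₀ : H₁)) : ℂ)).re)
    intro z
    have hmt := mono_test a₀ b₀ hab₀ 0 (z • yc)
    simp only [Submodule.coe_smul, LinearPMap.map_smul, LinearPMap.map_zero, sub_zero,
      Submodule.coe_zero] at hmt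
    have hexp : ((inner ℂ (pq.1.1 - (↑a₀ : H₀)) (pq.2.1 - (↑b₀ : H₀) - z • (Dc yc : H₀)) : ℂ)
        + (inner ℂ (pq.1.2 - (G b₀ : H₁) - z • (↑yc : H₁)) (pq.2.2 - (G a₀ : H₁)) : ℂ))
        = ((inner ℂ (pq.1.1 - (↑a₀ : H₀)) (pq.2.1 - (↑b₀ : H₀)) : ℂ)
          + (inner ℂ (pq.1.2 - (G b₀ : H₁)) (pq.2.2 - (G a₀ : H₁)) : ℂ))
          - ((starRingEnd ℂ) z * (inner ℂ (↑yc : H₁) (pq.2.2 - (G a₀ : H₁)) : ℂ)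
            + z * (inner ℂ (pq.1.1 - (↑a₀ : H₀)) (Dc yc) : ℂ)) := by
      simp only [inner_sub_left, inner_sub_right, inner_smul_left, inner_smul_right]
      ring
    rw [hexp] at hmt
    rw [Complex.sub_re] at hmt
    linarith
  obtain ⟨hu'mem, hGu'⟩ := adjoint_recoverG hDc_dense hG key2
  have humem : pq.1.1 ∈ G.domain := by
    have heq : pq.1.1 = (pq.1.1 - (↑a₀ : H₀)) + (↑a₀ : H₀) := by abel
    rw [heq]; exact G.domain.add_mem hu'mem a₀.2
  have hGug : ∀ hm : pq.1.1 ∈ G.domain, G ⟨pq.1.1, hm⟩ = pq.2.2 := by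
    intro hm
    have hspl : (⟨pq.1.1, hm⟩ : G.domain)
        = ⟨pq.1.1 - (↑a₀ : H₀), hu'mem⟩ + a₀ := Subtype.ext (by simp)
    rw [hspl, LinearPMap.map_add, hGu']
    abel
  -- Step 2 : boundary data of pq belongs to h
  obtain ⟨uc, ub, hucmem, hubBD, hudec⟩ := exists_decomp hGc_closed hlg ⟨pq.1.1, humem⟩
  obtain ⟨vc, vb, hvcmem, hvbBD, hvdec⟩ := exists_decomp hDc_closed hld ⟨pq.1.2, hvmem⟩
  obtain ⟨hwm, hGw⟩ := BD_D_mem hGc_dense hDc_dense hle hG hD hvbBD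
  set w : G.domain := ⟨D vb, hwm⟩ with hwdef
  have hwBD : w ∈ BD Gc G := BD_D_BD hGc_dense hDc_dense hle hG hD hvbBD w rfl
  have hcrux : ∀ a b : G.domain, (a, b) ∈ h → 0 ≤ (gip G (ub - a) (w - b)).re := by
    intro a b hab
    obtain ⟨hGb, hDGb⟩ := BD_G_mem hGc_dense hDc_dense hle hG hD (hh.1 hab).2
    have hGbBD : (⟨G b, hGb⟩ : D.domain) ∈ BD Dc D :=
      BD_G_BD hGc_dense hDc_dense hle hG hD (hh.1 hab).2 _ rfl
    have hm := mono_test a b hab 0 0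
    simp only [Submodule.coe_zero, LinearPMap.map_zero, sub_zero] at hm
    set U : G.domain := ⟨pq.1.1, humem⟩ - a with hUdef
    set V : D.domain := ⟨pq.1.2, hvmem⟩ - ⟨G b, hGb⟩ with hVdef
    have hsp := beta_split hGc_dense hDc_dense hle hG hD U uc (ub - a) (w - b)
      V vc (vb - ⟨G b, hGb⟩)
      hucmem (BD_sub hubBD (hh.1 hab).1) (by rw [hUdef, hudec]; abel)
      hvcmem (BD_sub hvbBD hGbBD) (by rw [hVdef, hvdec]; abel)
      (by rw [Submodule.coe_sub, LinearPMap.map_sub, hDGb])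
    have e1 : pq.1.1 - (↑a : H₀) = (↑U : H₀) := rfl
    have e2 : pq.2.1 - (↑b : H₀) = D V := by
      rw [hVdef, LinearPMap.map_sub, hDvf hvmem, hDGb]
    have e3 : pq.1.2 - (G b : H₁) = (↑V : H₁) := rfl
    have e4 : pq.2.2 - (G a : H₁) = G U := by
      rw [hUdef, LinearPMap.map_sub, hGug humem]
    rw [e1, e2, e3, e4] at hm
    have hre : ((inner ℂ (↑U : H₀) (D V) : ℂ) + (inner ℂ (↑V : H₁) (G U) : ℂ)).re
        = (gip G (ub - a) (w - b)).re := by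
      rw [← hsp, Complex.add_re, Complex.add_re, complex_inner_re_symm (↑V : H₁) (G U)]
    rw [hre] at hm
    exact hm
  have hmem_h : (ub, w) ∈ h := by
    have hsub' : insert (ub, w) h ⊆ BD Gc G ×ˢ BD Gc G := by
      rintro x hx
      rcases Set.mem_insert_iff.mp hx with rfl | hxh
      · exact Set.mem_prod.mpr ⟨hubBD, hwBD⟩
      · exact hh.1 hxh
    have hmono' : MonotoneRelWRT (gip G) (insert (ub, w) h) := by
      rintro p hp q hq
      rcases Set.mem_insert_iff.mp hp with rfl | hp' <;>
        rcases Set.mem_insert_iff.mp hq with rfl | hq'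
      · simp [gip]
      · exact hcrux q.1 q.2 hq'
      · have := hcrux p.1 p.2 hp'
        rwa [gip_sub_swap] at this
      · exact hh.2.1 p hp' q hq'
    have heq := hh.2.2 _ hsub' hmono' (Set.subset_insert _ _)
    rw [← heq]
    exact Set.mem_insert _ _
  -- conclude
  have hdc : DomCond Gc G Dc D h pq.1 :=
    ⟨humem, hvmem, uc, ub, vc, vb, w, hucmem, hubBD, hudec, hvcmem, hvbBD, hvdec, rfl, hmem_h⟩
  obtain ⟨q', hq'⟩ := (hdom pq.1).mpr hdc
  obtain ⟨hu', hv', h1, h2⟩ := hA hq'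
  have hqeq : q' = pq.2 := by
    refine Prod.ext ?_ ?_
    · rw [h1]; exact hDvf hv'
    · rw [h2]; exact hGug hu'
  rw [hqeq] at hq'
  rwa [Prod.mk.eta] at hq'
end

section
/- In the setting of two densely defined closed operators G_c ⊆ −D_c* with G := −D_c*, D := −G_c*, suppose A is a maximal monotone restriction of the block operator (u,v) ↦ (Dv, Gu) on H₀ ⊕ H₁. Then there exists a maximal monotone relation h ⊆ BD(G) ⊕ BD(G) such that D(A) = {(u,v) ∈ D(G) × D(D) : (π_{BD(G)}u, Ď π_{BD(D)}v) ∈ h}. -/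
noncomputable section Aux
open LinearPMap

set_option linter.unusedSectionVars false

local notation "⟪" x ", " y "⟫" => @inner ℂ _ _ x y

variable {E F : Type*} [NormedAddCommGroup E] [InnerProductSpace ℂ E] [CompleteSpace E]
  [NormedAddCommGroup F] [InnerProductSpace ℂ F] [CompleteSpace F]

/-- Key integration-by-parts vanishing: if `u` is in the domain of `Tc` then the boundary
pairing of `u` against any `v ∈ D(S)` vanishes, where `S = -Tc†`. -/
lemma pairing_vanish (Tc : E →ₗ.[ℂ] F) (hTc_dense : Dense (Tc.domain : Set E))
    (T : E →ₗ.[ℂ] F) (S : F →ₗ.[ℂ] E)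
    (hS : S = -Tc.adjoint) (hle : Tc ≤ T)
    (u : T.domain) (hu : (u : E) ∈ Tc.domain) (v : S.domain) :
    ⟪(u : E), S v⟫ + ⟪T u, (v : F)⟫ = 0 := by
  subst hS
  have h4 : (-Tc.adjoint) v = -(Tc.adjoint v) := LinearPMap.neg_apply _ v
  have h2 := LinearPMap.adjoint_isFormalAdjoint hTc_dense v (⟨(u : E), hu⟩ : Tc.domain)
  have h3 : Tc ⟨(u : E), hu⟩ = T u := hle.2 rfl
  have h5 : ⟪(u : E), Tc.adjoint v⟫ = ⟪T u, (v : F)⟫ := by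
    rw [← inner_conj_symm, h2, h3, inner_conj_symm]
  rw [h4, inner_neg_right, h5]
  ring

/-- `Tc ≤ -Sc†` implies `Sc ≤ -Tc†`. -/
lemma dual_le (Tc : E →ₗ.[ℂ] F) (Sc : F →ₗ.[ℂ] E)
    (hTc_dense : Dense (Tc.domain : Set E))
    (hSc_dense : Dense (Sc.domain : Set F))
    (hle : Tc ≤ -Sc.adjoint) : Sc ≤ -Tc.adjoint := by
  have hfa : Tc.IsFormalAdjoint (-Sc) := by
    intro x y
    have h1 : Tc x = (-Sc.adjoint) ⟨(x : E), hle.1 x.2⟩ := hle.2 rfl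
    have h2 : (-Sc.adjoint) (⟨(x : E), hle.1 x.2⟩ : (-Sc.adjoint).domain)
        = -(Sc.adjoint ⟨(x : E), hle.1 x.2⟩) := LinearPMap.neg_apply _ _
    have h3 := LinearPMap.adjoint_isFormalAdjoint hSc_dense
      (⟨(x : E), hle.1 x.2⟩ : Sc.adjoint.domain) y
    have h4 : (-Sc) y = -(Sc y) := LinearPMap.neg_apply _ _
    rw [h1, h2, inner_neg_left, h3, h4, inner_neg_right]
  have h := hfa.le_adjoint hTc_dense
  refine ⟨h.1, ?_⟩
  intro x y hxy
  have h5 : (-Tc.adjoint) y = -(Tc.adjoint y) := LinearPMap.neg_apply _ _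
  have h6 := h.2 (x := x) (y := y) hxy
  have h7 : (-Sc) x = -(Sc x) := LinearPMap.neg_apply _ _
  rw [h5, ← h6, h7, neg_neg]

/-- Flipping boundary data: if `ub ∈ BD(Tc,T)` then `T ub ∈ D(S)`, `S (T ub) = ub`, and
`T ub ∈ BD(Sc,S)`. -/
lemma bd_flip (Tc T : E →ₗ.[ℂ] F) (Sc S : F →ₗ.[ℂ] E)
    (hTc_dense : Dense (Tc.domain : Set E)) (hSc_dense : Dense (Sc.domain : Set F))
    (hT : T = -Sc.adjoint) (hS : S = -Tc.adjoint)
    (hleT : Tc ≤ T) (hleS : Sc ≤ S)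
    (ub : T.domain) (hub : ub ∈ BD Tc T) :
    ∃ w : S.domain, (w : F) = T ub ∧ S w = (ub : E) ∧ w ∈ BD Sc S := by
  have key : ∀ x : Tc.domain, ⟪-(ub : E), (x : E)⟫ = ⟪T ub, Tc x⟫ := by
    intro x
    have h0 := hub ⟨(x : E), hleT.1 x.2⟩ x.2
    unfold gip at h0
    have h1 : T (⟨(x : E), hleT.1 x.2⟩ : T.domain) = Tc x := (hleT.2 rfl).symm
    rw [h1] at h0
    -- h0 : ⟪x, ub⟫ + ⟪Tc x, T ub⟫ = 0
    have h2 : ⟪Tc x, T ub⟫ = -⟪(x : E), (ub : E)⟫ := by linear_combination h0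
    have h3 : ⟪T ub, Tc x⟫ = (starRingEnd ℂ) (inner ℂ (Tc x) (T ub)) := (inner_conj_symm _ _).symm
    rw [inner_neg_left, h3, h2, _root_.map_neg, inner_conj_symm]
  have hmem : T ub ∈ S.domain := by
    rw [hS]
    exact LinearPMap.mem_adjoint_domain_of_exists _ ⟨-(ub : E), key⟩
  refine ⟨⟨T ub, hmem⟩, rfl, ?_, ?_⟩
  · -- S ⟨T ub⟩ = ub
    have hmem' : T ub ∈ Tc.adjoint.domain := by rw [hS] at hmem; exact hmem
    have hval : Tc.adjoint ⟨T ub, hmem'⟩ = -(ub : E) :=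
      LinearPMap.adjoint_apply_eq hTc_dense _ fun x => key x
    have : S ⟨T ub, hmem⟩ = (-Tc.adjoint) ⟨T ub, hmem'⟩ := by
      subst hS; rfl
    rw [this, LinearPMap.neg_apply, hval, neg_neg]
  · -- membership in BD Sc S
    intro v hv
    unfold gip
    have h6 := pairing_vanish Sc hSc_dense S T hT hleS v hv ub
    -- ⟪v, T ub⟫ + ⟪S v, ub⟫ = 0
    have hSw : S ⟨T ub, hmem⟩ = (ub : E) := by
      have hmem' : T ub ∈ Tc.adjoint.domain := by rw [hS] at hmem; exact hmem
      have hval : Tc.adjoint ⟨T ub, hmem'⟩ = -(ub : E) :=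
        LinearPMap.adjoint_apply_eq hTc_dense _ fun x => key x
      have : S ⟨T ub, hmem⟩ = (-Tc.adjoint) ⟨T ub, hmem'⟩ := by subst hS; rfl
      rw [this, LinearPMap.neg_apply, hval, neg_neg]
    rw [hSw]
    exact h6

/-- Graph-orthogonal decomposition of `D(T)` into `D(Tc) ⊕ BD(Tc,T)`. -/
lemma exists_bd_decomp [CompleteSpace E] [CompleteSpace F]
    (Tc T : E →ₗ.[ℂ] F) (hTc_closed : Tc.IsClosed) (hle : Tc ≤ T)
    (u : T.domain) :
    ∃ uc ub : T.domain, (uc : E) ∈ Tc.domain ∧ ub ∈ BD Tc T ∧ u = uc + ub := by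
  classical
  set eqv := WithLp.linearEquiv 2 ℂ (E × F) with heqv
  set K : Submodule ℂ (WithLp 2 (E × F)) := Tc.graph.comap eqv.toLinearMap with hK
  have hKclosed : IsClosed (K : Set (WithLp 2 (E × F))) := by
    have hc : Continuous fun x : WithLp 2 (E × F) => eqv x :=
      (WithLp.prodContinuousLinearEquiv 2 ℂ E F).continuous
    exact hTc_closed.preimage hc
  haveI : CompleteSpace K := hKclosed.completeSpace_coe
  obtain ⟨y, hy, z, hz, hsum⟩ :=
    K.exists_add_mem_mem_orthogonal (eqv.symm ((u : E), T u))
  have hzT : eqv z ∈ T.graph := by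
    have h1 : eqv (eqv.symm ((u : E), T u)) ∈ T.graph := by
      rw [LinearEquiv.apply_symm_apply]; exact T.mem_graph u
    have h2 : eqv y ∈ T.graph := LinearPMap.le_graph_of_le hle hy
    have h3 : z = eqv.symm ((u : E), T u) - y := by rw [hsum]; abel
    rw [h3, _root_.map_sub]
    exact sub_mem h1 h2
  obtain ⟨yd, hyd1, hyd2⟩ := (LinearPMap.mem_graph_iff Tc).mp (show eqv y ∈ Tc.graph from hy)
  obtain ⟨zd, hzd1, hzd2⟩ := (LinearPMap.mem_graph_iff T).mp hzT
  refine ⟨⟨(yd : E), hle.1 yd.2⟩, zd, yd.2, ?_, ?_⟩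
  · -- boundary membership
    intro v hv
    have hkK : eqv.symm ((v : E), T v) ∈ K := by
      show eqv (eqv.symm ((v : E), T v)) ∈ Tc.graph
      rw [LinearEquiv.apply_symm_apply]
      exact (LinearPMap.mem_graph_iff Tc).mpr ⟨⟨(v : E), hv⟩, rfl, hle.2 (x := ⟨(v : E), hv⟩) (y := v) rfl⟩
    have horth := (Submodule.mem_orthogonal K z).mp hz _ hkK
    rw [WithLp.prod_inner_apply] at horth
    have e1 : (eqv.symm ((v : E), T v)).ofLp.1 = (v : E) := rfl
    have e2 : (eqv.symm ((v : E), T v)).ofLp.2 = T v := rfl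
    have e3 : z.ofLp.1 = (eqv z).1 := rfl
    have e4 : z.ofLp.2 = (eqv z).2 := rfl
    rw [e1, e2, e3, e4] at horth
    unfold gip
    rw [hzd2, hzd1]
    exact horth
  · -- sum decomposition
    apply Subtype.ext
    have h5 : eqv (eqv.symm ((u : E), T u)) = eqv y + eqv z := by rw [hsum, _root_.map_add]
    rw [LinearEquiv.apply_symm_apply] at h5
    have h1 : ((u : E), T u).1 = (eqv y + eqv z).1 := by rw [h5]
    simp only [Prod.fst_add] at h1
    show (u : E) = (⟨(yd : E), hle.1 yd.2⟩ : T.domain) + (zd : E)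
    rw [h1, ← hyd1, ← hzd1]

lemma gip_sub_sub (T : E →ₗ.[ℂ] F) (a a' b b' : T.domain) :
    gip T (a - a') (b - b') = gip T a b - gip T a b' - gip T a' b + gip T a' b' := by
  unfold gip
  rw [LinearPMap.map_sub, LinearPMap.map_sub]
  have h1 : ((a - a' : T.domain) : E) = (a : E) - (a' : E) := rfl
  have h2 : ((b - b' : T.domain) : E) = (b : E) - (b' : E) := rfl
  rw [h1, h2]
  simp only [inner_sub_left, inner_sub_right]
  ring

end Aux

noncomputable section Aux2

local notation "⟪" x ", " y "⟫" => @inner ℂ _ _ x y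

set_option linter.unusedSectionVars false

variable {H₀ H₁ : Type*} [NormedAddCommGroup H₀] [InnerProductSpace ℂ H₀] [CompleteSpace H₀]
  [NormedAddCommGroup H₁] [InnerProductSpace ℂ H₁] [CompleteSpace H₁]

/-- Boundary-data witness: `(a, b)` are the boundary data of the pair `p = (u, v)`. -/
def BW (Gc G : H₀ →ₗ.[ℂ] H₁) (Dc D : H₁ →ₗ.[ℂ] H₀) (p : H₀ × H₁) (a b : G.domain) : Prop :=
  ∃ (hu : p.1 ∈ G.domain) (hv : p.2 ∈ D.domain) (uc : G.domain) (vc vb : D.domain),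
    (uc : H₀) ∈ Gc.domain ∧ a ∈ BD Gc G ∧ (⟨p.1, hu⟩ : G.domain) = uc + a ∧
    (vc : H₁) ∈ Dc.domain ∧ vb ∈ BD Dc D ∧ (⟨p.2, hv⟩ : D.domain) = vc + vb ∧
    (b : H₀) = D vb

variable (Gc G : H₀ →ₗ.[ℂ] H₁) (Dc D : H₁ →ₗ.[ℂ] H₀)

lemma beta_eq_gip (hGc_dense : Dense (Gc.domain : Set H₀)) (hDc_dense : Dense (Dc.domain : Set H₁))
    (hG : G = -Dc.adjoint) (hD : D = -Gc.adjoint) (hleG : Gc ≤ G) (hleD : Dc ≤ D)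
    (u : G.domain) (v : D.domain) (uc ub : G.domain) (vc vb : D.domain) (w : G.domain)
    (huc : (uc : H₀) ∈ Gc.domain) (hub : ub ∈ BD Gc G) (hu : u = uc + ub)
    (hvc : (vc : H₁) ∈ Dc.domain) (hvb : vb ∈ BD Dc D) (hv : v = vc + vb)
    (hw : (w : H₀) = D vb) :
    ⟪(u : H₀), D v⟫ + ⟪G u, (v : H₁)⟫ = gip G ub w := by
  obtain ⟨w', hw'1, hw'2, hw'3⟩ := bd_flip Dc D Gc G hDc_dense hGc_dense hD hG hleD hleG vb hvb
  have hww : w = w' := Subtype.ext (by rw [hw, hw'1])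
  have h1 := pairing_vanish Gc hGc_dense G D hD hleG uc huc vc
  have h2 := pairing_vanish Gc hGc_dense G D hD hleG uc huc vb
  have h3 := pairing_vanish Dc hDc_dense D G hG hleD vc hvc ub
  have h3' : ⟪(ub : H₀), D vc⟫ + ⟪G ub, (vc : H₁)⟫ = 0 := by
    have hc := congrArg (starRingEnd ℂ) h3
    simp only [map_add, inner_conj_symm, map_zero] at hc
    linear_combination hc
  subst hu hv
  have hDadd : D (vc + vb) = D vc + D vb := LinearPMap.map_add D vc vb
  have hGadd : G (uc + ub) = G uc + G ub := LinearPMap.map_add G uc ub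
  have hcoe1 : ((uc + ub : G.domain) : H₀) = (uc : H₀) + (ub : H₀) := rfl
  have hcoe2 : ((vc + vb : D.domain) : H₁) = (vc : H₁) + (vb : H₁) := rfl
  unfold gip
  rw [hww, hw'2, hw'1, hcoe1, hcoe2, hDadd, hGadd]
  simp only [inner_add_left, inner_add_right]
  linear_combination h1 + h2 + h3'

lemma re_ip_eq (hGc_dense : Dense (Gc.domain : Set H₀)) (hDc_dense : Dense (Dc.domain : Set H₁))
    (hG : G = -Dc.adjoint) (hD : D = -Gc.adjoint) (hleG : Gc ≤ G) (hleD : Dc ≤ D)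
    (p p' q q' : H₀ × H₁) (a b a' b' : G.domain)
    (hbw : BW Gc G Dc D p a b) (hbw' : BW Gc G Dc D p' a' b')
    (hq : (p, q) ∈ blockRel G D) (hq' : (p', q') ∈ blockRel G D) :
    (ipProd (p - p') (q - q')).re = (gip G (a - a') (b - b')).re := by
  obtain ⟨hu, hv, hq1, hq2⟩ := hq
  obtain ⟨hu', hv', hq1', hq2'⟩ := hq'
  obtain ⟨hu0, hv0, uc, vc, vb, huc, hab, hdecu, hvc, hvb, hdecv, hwb⟩ := hbw
  obtain ⟨hu0', hv0', xc, yc, yb, hxc, hab', hdecx, hyc, hyb, hdecy, hwb'⟩ := hbw'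
  set u : G.domain := ⟨p.1, hu⟩ with hu_def
  set v : D.domain := ⟨p.2, hv⟩ with hv_def
  set x : G.domain := ⟨p'.1, hu'⟩ with hx_def
  set y : D.domain := ⟨p'.2, hv'⟩ with hy_def
  have e1 : ⟪(u : H₀), D v⟫ + ⟪G u, (v : H₁)⟫ = gip G a b :=
    beta_eq_gip Gc G Dc D hGc_dense hDc_dense hG hD hleG hleD u v uc a vc vb b
      huc hab hdecu hvc hvb hdecv hwb
  have e2 : ⟪(u : H₀), D y⟫ + ⟪G u, (y : H₁)⟫ = gip G a b' :=
    beta_eq_gip Gc G Dc D hGc_dense hDc_dense hG hD hleG hleD u y uc a yc yb b'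
      huc hab hdecu hyc hyb hdecy hwb'
  have e3 : ⟪(x : H₀), D v⟫ + ⟪G x, (v : H₁)⟫ = gip G a' b :=
    beta_eq_gip Gc G Dc D hGc_dense hDc_dense hG hD hleG hleD x v xc a' vc vb b
      hxc hab' hdecx hvc hvb hdecv hwb
  have e4 : ⟪(x : H₀), D y⟫ + ⟪G x, (y : H₁)⟫ = gip G a' b' :=
    beta_eq_gip Gc G Dc D hGc_dense hDc_dense hG hD hleG hleD x y xc a' yc yb b'
      hxc hab' hdecx hyc hyb hdecy hwb'
  have central : ⟪(u : H₀) - (x : H₀), D v - D y⟫ + ⟪G u - G x, (v : H₁) - (y : H₁)⟫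
      = gip G (a - a') (b - b') := by
    rw [gip_sub_sub]
    simp only [inner_sub_left, inner_sub_right]
    linear_combination e1 - e2 - e3 + e4
  have hip : ipProd (p - p') (q - q') = ⟪(u : H₀) - (x : H₀), D v - D y⟫
      + ⟪(v : H₁) - (y : H₁), G u - G x⟫ := by
    have a1 : q.1 = D v := hq1
    have a2 : q.2 = G u := hq2
    have a3 : q'.1 = D y := hq1'
    have a4 : q'.2 = G x := hq2'
    unfold ipProd
    simp only [Prod.fst_sub, Prod.snd_sub, a1, a2, a3, a4]
    rfl
  have hre2 : (⟪(v : H₁) - (y : H₁), G u - G x⟫).re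
      = (⟪G u - G x, (v : H₁) - (y : H₁)⟫).re := by
    rw [← inner_conj_symm, Complex.conj_re]
  rw [hip, Complex.add_re, hre2, ← Complex.add_re, central]

lemma exists_bw (hGc_dense : Dense (Gc.domain : Set H₀)) (hDc_dense : Dense (Dc.domain : Set H₁))
    (hGc_closed : Gc.IsClosed) (hDc_closed : Dc.IsClosed)
    (hG : G = -Dc.adjoint) (hD : D = -Gc.adjoint) (hleG : Gc ≤ G) (hleD : Dc ≤ D)
    (p : H₀ × H₁) (hu : p.1 ∈ G.domain) (hv : p.2 ∈ D.domain) :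
    ∃ a b : G.domain, BW Gc G Dc D p a b := by
  obtain ⟨uc, ub, huc, hub, hdecu⟩ := exists_bd_decomp Gc G hGc_closed hleG ⟨p.1, hu⟩
  obtain ⟨vc, vb, hvc, hvb, hdecv⟩ := exists_bd_decomp Dc D hDc_closed hleD ⟨p.2, hv⟩
  obtain ⟨w, hw1, hw2, hw3⟩ := bd_flip Dc D Gc G hDc_dense hGc_dense hD hG hleD hleG vb hvb
  exact ⟨ub, w, hu, hv, uc, vc, vb, huc, hub, hdecu, hvc, hvb, hdecv, hw1⟩

lemma mem_A_of_bw (hGc_dense : Dense (Gc.domain : Set H₀))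
    (hDc_dense : Dense (Dc.domain : Set H₁))
    (hG : G = -Dc.adjoint) (hD : D = -Gc.adjoint) (hleG : Gc ≤ G) (hleD : Dc ≤ D)
    (A : Set ((H₀ × H₁) × (H₀ × H₁))) (hA : A ⊆ blockRel G D)
    (hAmax : MaximalMonotoneRelWRT ipProd A)
    (h' : Set (G.domain × G.domain)) (hmono : MonotoneRelWRT (gip G) h')
    (hbd : ∀ p' q', (p', q') ∈ A → ∃ a' b', BW Gc G Dc D p' a' b' ∧ (a', b') ∈ h')
    (p₀ q₀ : H₀ × H₁) (hq₀ : ((p₀, q₀) : (H₀ × H₁) × (H₀ × H₁)) ∈ blockRel G D)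
    (a b : G.domain) (hab : (a, b) ∈ h') (hbw : BW Gc G Dc D p₀ a b) :
    (p₀, q₀) ∈ A := by
  set B : Set ((H₀ × H₁) × (H₀ × H₁)) := insert (p₀, q₀) A with hB
  have hmonoB : MonotoneRelWRT ipProd B := by
    intro r hr s hs
    rcases hr with hr | hr
    · rcases hs with hs | hs
      · -- both are the new point
        rw [hr, hs]
        simp only [sub_self]
        unfold ipProd
        simp
      · -- r new, s old
        obtain ⟨a', b', hbw', hab'⟩ := hbd s.1 s.2 hs
        have hre := re_ip_eq Gc G Dc D hGc_dense hDc_dense hG hD hleG hleD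
          p₀ s.1 q₀ s.2 a b a' b' hbw hbw' hq₀ (hA hs)
        rw [hr]
        have : ((p₀, q₀).1 - (s.1, s.2).1, (p₀, q₀).2 - (s.1, s.2).2) = (p₀ - s.1, q₀ - s.2) := rfl
        rw [show ((p₀, q₀) : (H₀ × H₁) × (H₀ × H₁)).1 = p₀ from rfl]
        rw [show ((p₀, q₀) : (H₀ × H₁) × (H₀ × H₁)).2 = q₀ from rfl]
        rw [hre]
        exact hmono (a, b) hab (a', b') hab'
    · rcases hs with hs | hs
      · -- r old, s new
        obtain ⟨a', b', hbw', hab'⟩ := hbd r.1 r.2 hr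
        have hre := re_ip_eq Gc G Dc D hGc_dense hDc_dense hG hD hleG hleD
          r.1 p₀ r.2 q₀ a' b' a b hbw' hbw (hA hr) hq₀
        rw [hs]
        rw [show ((p₀, q₀) : (H₀ × H₁) × (H₀ × H₁)).1 = p₀ from rfl]
        rw [show ((p₀, q₀) : (H₀ × H₁) × (H₀ × H₁)).2 = q₀ from rfl]
        rw [hre]
        exact hmono (a', b') hab' (a, b) hab
      · exact hAmax.1 r hr s hs
  have hBA : B = A := hAmax.2 B hmonoB (Set.subset_insert _ _)
  rw [← hBA]
  exact Set.mem_insert _ _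

end Aux2

/-- If a restriction `A` of the block operator `(u,v) ↦ (Dv, Gu)` is maximal monotone
on `H₀ ⊕ H₁`, then its domain is given by a maximal monotone boundary relation
`h ⊆ BD(G) ⊕ BD(G)`. -/
theorem bd_relation_of_maximalMonotone {H₀ H₁ : Type*}
    [NormedAddCommGroup H₀] [InnerProductSpace ℂ H₀] [CompleteSpace H₀]
    [NormedAddCommGroup H₁] [InnerProductSpace ℂ H₁] [CompleteSpace H₁]
    (Gc : H₀ →ₗ.[ℂ] H₁) (Dc : H₁ →ₗ.[ℂ] H₀)
    (hGc_dense : Dense (Gc.domain : Set H₀)) (hDc_dense : Dense (Dc.domain : Set H₁))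
    (hGc_closed : Gc.IsClosed) (hDc_closed : Dc.IsClosed)
    (hle : Gc ≤ -Dc.adjoint)
    (G : H₀ →ₗ.[ℂ] H₁) (D : H₁ →ₗ.[ℂ] H₀)
    (hG : G = -Dc.adjoint) (hD : D = -Gc.adjoint)
    (A : Set ((H₀ × H₁) × (H₀ × H₁))) (hA : A ⊆ blockRel G D)
    (hAmax : MaximalMonotoneRelWRT ipProd A) :
    ∃ h : Set (G.domain × G.domain), MaxMonBD G (BD Gc G) h ∧
      ∀ p : H₀ × H₁, (∃ q, (p, q) ∈ A) ↔ DomCond Gc G Dc D h p := by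
  classical
  have hleG : Gc ≤ G := by rw [hG]; exact hle
  have hleD : Dc ≤ D := by rw [hD]; exact dual_le Gc Dc hGc_dense hDc_dense (hG ▸ hle)
  set hrel : Set (G.domain × G.domain) :=
    {ab | ∃ p : H₀ × H₁, (∃ q, (p, q) ∈ A) ∧ BW Gc G Dc D p ab.1 ab.2} with hhrel
  -- fact 1 : each element of `A` gives boundary data in `hrel`
  have hbd : ∀ p q, (p, q) ∈ A → ∃ a b, BW Gc G Dc D p a b ∧ (a, b) ∈ hrel := by
    intro p q hpq
    obtain ⟨hu, hv, -, -⟩ := hA hpq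
    obtain ⟨a, b, hbw⟩ := exists_bw Gc G Dc D hGc_dense hDc_dense hGc_closed hDc_closed
      hG hD hleG hleD p hu hv
    exact ⟨a, b, hbw, ⟨p, ⟨q, hpq⟩, hbw⟩⟩
  -- fact 2 : `hrel` is monotone
  have hmono : MonotoneRelWRT (gip G) hrel := by
    rintro ⟨a, b⟩ ⟨p, ⟨q, hq⟩, hbw⟩ ⟨a', b'⟩ ⟨p', ⟨q', hq'⟩, hbw'⟩
    have hre := re_ip_eq Gc G Dc D hGc_dense hDc_dense hG hD hleG hleD
      p p' q q' a b a' b' hbw hbw' (hA hq) (hA hq')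
    rw [show ((a, b) : G.domain × G.domain).1 = a from rfl]
    rw [show ((a, b) : G.domain × G.domain).2 = b from rfl]
    rw [show ((a', b') : G.domain × G.domain).1 = a' from rfl]
    rw [show ((a', b') : G.domain × G.domain).2 = b' from rfl]
    rw [← hre]
    exact hAmax.1 (p, q) hq (p', q') hq'
  -- fact 3 : `hrel ⊆ BD ×ˢ BD`
  have hsub : hrel ⊆ (BD Gc G) ×ˢ (BD Gc G) := by
    rintro ⟨a, b⟩ ⟨p, -, hu, hv, uc, vc, vb, huc, hab, hdecu, hvc, hvb, hdecv, hwb⟩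
    obtain ⟨w', hw1, hw2, hw3⟩ := bd_flip Dc D Gc G hDc_dense hGc_dense hD hG hleD hleG vb hvb
    have : b = w' := Subtype.ext (by rw [hwb, hw1])
    exact ⟨hab, this ▸ hw3⟩
  -- fact 4 : membership in `A` from boundary data in a monotone superset of `hrel`
  have hmemA : ∀ (h' : Set (G.domain × G.domain)), MonotoneRelWRT (gip G) h' → hrel ⊆ h' →
      ∀ (p₀ q₀ : H₀ × H₁), ((p₀, q₀) : (H₀ × H₁) × (H₀ × H₁)) ∈ blockRel G D →
      ∀ a b : G.domain, (a, b) ∈ h' → BW Gc G Dc D p₀ a b → (p₀, q₀) ∈ A := by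
    intro h' hmono' hsub' p₀ q₀ hq₀ a b hab hbw
    refine mem_A_of_bw Gc G Dc D hGc_dense hDc_dense hG hD hleG hleD A hA hAmax h' hmono'
      ?_ p₀ q₀ hq₀ a b hab hbw
    intro p' q' hpq
    obtain ⟨a', b', hbw', hmem'⟩ := hbd p' q' hpq
    exact ⟨a', b', hbw', hsub' hmem'⟩
  refine ⟨hrel, ⟨hsub, hmono, ?_⟩, ?_⟩
  · -- maximality of hrel
    intro h' hsub' hmono' hle'
    refine Set.Subset.antisymm ?_ hle'
    rintro ⟨a, b⟩ hab
    have haBD : a ∈ BD Gc G := (hsub' hab).1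
    have hbBD : b ∈ BD Gc G := (hsub' hab).2
    obtain ⟨va, hva1, hva2, hva3⟩ := bd_flip Gc G Dc D hGc_dense hDc_dense hG hD hleG hleD b hbBD
    set p₀ : H₀ × H₁ := ((a : H₀), (va : H₁)) with hp₀
    set q₀ : H₀ × H₁ := (D va, G a) with hq₀def
    have hq₀ : ((p₀, q₀) : (H₀ × H₁) × (H₀ × H₁)) ∈ blockRel G D := by
      refine ⟨a.2, va.2, ?_, ?_⟩
      · rfl
      · rfl
    have hbw : BW Gc G Dc D p₀ a b := by
      refine ⟨a.2, va.2, 0, 0, va, ?_, haBD, ?_, ?_, hva3, ?_, ?_⟩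
      · exact Gc.domain.zero_mem
      · apply Subtype.ext; show (a : H₀) = ((0 : G.domain) : H₀) + (a : H₀); simp
      · exact Dc.domain.zero_mem
      · apply Subtype.ext; show (va : H₁) = ((0 : D.domain) : H₁) + (va : H₁); simp
      · exact hva2.symm
    have hmemA' := hmemA h' hmono' hle' p₀ q₀ hq₀ a b hab hbw
    exact ⟨p₀, ⟨q₀, hmemA'⟩, hbw⟩
  · -- domain characterization
    intro p
    constructor
    · rintro ⟨q, hpq⟩
      obtain ⟨a, b, hbw, hmem⟩ := hbd p q hpq
      obtain ⟨hu, hv, uc, vc, vb, huc, hab, hdecu, hvc, hvb, hdecv, hwb⟩ := hbw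
      exact ⟨hu, hv, uc, a, vc, vb, b, huc, hab, hdecu, hvc, hvb, hdecv, hwb, hmem⟩
    · rintro ⟨hu, hv, uc, ub, vc, vb, w, huc, hub, hdecu, hvc, hvb, hdecv, hwb, hmem⟩
      have hbw : BW Gc G Dc D p ub w := ⟨hu, hv, uc, vc, vb, huc, hub, hdecu, hvc, hvb, hdecv, hwb⟩
      set q₀ : H₀ × H₁ := (D ⟨p.2, hv⟩, G ⟨p.1, hu⟩) with hq₀def
      have hq₀ : ((p, q₀) : (H₀ × H₁) × (H₀ × H₁)) ∈ blockRel G D := ⟨hu, hv, rfl, rfl⟩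
      exact ⟨q₀, hmemA hrel hmono (le_refl _) p q₀ hq₀ ub w hmem hbw⟩
end

section
/- Let A be a maximal monotone restriction of the block operator (u,v) ↦ (Dv, Gu), where G := −D_c*, D := −G_c* for densely defined closed G_c ⊆ −D_c*. Then for (u,v) ∈ D(G) × D(D), one has (u,v) ∈ D(A) if and only if (P_{BD(G)}u, P_{BD(D)}v) ∈ D(A), where P_{BD(G)} and P_{BD(D)} denote the orthogonal projections onto BD(G) in H¹(|G|+i) and onto BD(D) in H¹(|D|+i) respectively (viewed as idempotents on the domains). -/
noncomputable section AuxiliaryLemmas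

open Complex in
private lemma cross0 {E F : Type*} [NormedAddCommGroup E] [InnerProductSpace ℂ E]
    [CompleteSpace E] [NormedAddCommGroup F] [InnerProductSpace ℂ F] [CompleteSpace F]
    (T : E →ₗ.[ℂ] F) (hT : Dense (T.domain : Set E))
    (x : T.adjoint.domain) (y : T.domain) :
    ((inner ℂ (x : F) (T y) : ℂ) + (inner ℂ (y : E) (-(T.adjoint x)) : ℂ)).re = 0 := by
  have h := T.adjoint_isFormalAdjoint hT x y
  have h2 : (inner ℂ ((y : E)) (T.adjoint x) : ℂ)
      = (starRingEnd ℂ) ((inner ℂ ((x : F)) (T y)) : ℂ) := by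
    rw [← h]; exact (inner_conj_symm _ _).symm
  rw [inner_neg_right, h2, Complex.add_re, Complex.neg_re, Complex.conj_re]
  ring

private lemma add_core_mem {H₀ H₁ : Type*}
    [NormedAddCommGroup H₀] [InnerProductSpace ℂ H₀] [CompleteSpace H₀]
    [NormedAddCommGroup H₁] [InnerProductSpace ℂ H₁] [CompleteSpace H₁]
    (Gc : H₀ →ₗ.[ℂ] H₁) (Dc : H₁ →ₗ.[ℂ] H₀)
    (hGc_dense : Dense (Gc.domain : Set H₀)) (hDc_dense : Dense (Dc.domain : Set H₁))
    (hle : Gc ≤ -Dc.adjoint)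
    (A : Set ((H₀ × H₁) × (H₀ × H₁)))
    (hA : A ⊆ blockRel (-Dc.adjoint) (-Gc.adjoint))
    (hAmax : MaximalMonotoneRelWRT ipProd A)
    (uc' : Gc.domain) (vc' : Dc.domain)
    (p : (H₀ × H₁) × (H₀ × H₁)) (hp : p ∈ A) :
    ((p.1.1 + (uc' : H₀), p.1.2 + (vc' : H₁)), (p.2.1 + Dc vc', p.2.2 + Gc uc')) ∈ A := by
  set s : H₀ × H₁ := ((uc' : H₀), (vc' : H₁)) with hs
  set t : H₀ × H₁ := (Dc vc', Gc uc') with ht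
  -- the element uc' as an element of the domain of Dc.adjoint
  have hGeq : (Gc uc' : H₁) = -(Dc.adjoint ⟨(uc' : H₀), hle.1 uc'.2⟩) := by
    have h := hle.2 (x := uc') (y := ⟨(uc' : H₀), hle.1 uc'.2⟩) rfl
    rw [h, LinearPMap.neg_apply]
  have hst : (ipProd s t).re = 0 := by
    have h := cross0 Dc hDc_dense ⟨(uc' : H₀), hle.1 uc'.2⟩ vc'
    simpa [ipProd, hs, ht, hGeq] using h
  have hcross1 : ∀ r ∈ A, (ipProd r.1 t).re + (ipProd s r.2).re = 0 := by
    intro r hr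
    obtain ⟨hu1, hv1, e1, e2⟩ := hA hr
    have h1 := cross0 Dc hDc_dense (⟨r.1.1, hu1⟩ : Dc.adjoint.domain) vc'
    have h2 := cross0 Gc hGc_dense (⟨r.1.2, hv1⟩ : Gc.adjoint.domain) uc'
    have e1' : r.2.1 = -(Gc.adjoint ⟨r.1.2, hv1⟩) := by
      rw [e1, LinearPMap.neg_apply]
    have e2' : r.2.2 = -(Dc.adjoint ⟨r.1.1, hu1⟩) := by
      rw [e2, LinearPMap.neg_apply]
    simp only [ipProd, hs, ht, e1', e2', Complex.add_re] at h1 h2 ⊢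
    push_cast at h1 h2 ⊢
    linarith
  have hlinL : ∀ (a b c : H₀ × H₁), ipProd (a - b) c = ipProd a c - ipProd b c := by
    intro a b c; simp [ipProd, inner_sub_left]; ring
  have hlinR : ∀ (a b c : H₀ × H₁), ipProd a (b - c) = ipProd a b - ipProd a c := by
    intro a b c; simp [ipProd, inner_sub_right]; ring
  have main : ∀ r ∈ A, ∀ r' ∈ A,
      0 ≤ (ipProd (r.1 - r'.1 + s) (r.2 - r'.2 + t)).re := by
    intro r hr r' hr'
    have hmono := hAmax.1 r hr r' hr'
    have expand : ipProd (r.1 - r'.1 + s) (r.2 - r'.2 + t)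
        = ipProd (r.1 - r'.1) (r.2 - r'.2)
          + (ipProd (r.1 - r'.1) t + ipProd s (r.2 - r'.2)) + ipProd s t := by
      simp only [ipProd, Prod.fst_add, Prod.snd_add, Prod.fst_sub, Prod.snd_sub,
        inner_add_left, inner_add_right, inner_sub_left, inner_sub_right]
      ring
    have c1 := hcross1 r hr
    have c2 := hcross1 r' hr'
    have d1 : (ipProd (r.1 - r'.1) t).re = (ipProd r.1 t).re - (ipProd r'.1 t).re := by
      rw [hlinL, Complex.sub_re]
    have d2 : (ipProd s (r.2 - r'.2)).re = (ipProd s r.2).re - (ipProd s r'.2).re := by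
      rw [hlinR, Complex.sub_re]
    rw [expand]
    simp only [Complex.add_re]
    linarith
  set B : Set ((H₀ × H₁) × (H₀ × H₁)) :=
    A ∪ (fun r => (r.1 + s, r.2 + t)) '' A with hB
  have negneg : ∀ x y : H₀ × H₁, ipProd (-x) (-y) = ipProd x y := by
    intro x y; simp [ipProd]
  have hBmono : MonotoneRelWRT ipProd B := by
    rintro q₁ (hq₁ | ⟨r, hr, rfl⟩) q₂ (hq₂ | ⟨r', hr', rfl⟩)
    · exact hAmax.1 q₁ hq₁ q₂ hq₂
    · dsimp only
      rw [show q₁.1 - (r'.1 + s) = -(r'.1 - q₁.1 + s) by abel,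
        show q₁.2 - (r'.2 + t) = -(r'.2 - q₁.2 + t) by abel, negneg]
      exact main r' hr' q₁ hq₁
    · dsimp only
      rw [show r.1 + s - q₂.1 = r.1 - q₂.1 + s by abel,
        show r.2 + t - q₂.2 = r.2 - q₂.2 + t by abel]
      exact main r hr q₂ hq₂
    · dsimp only
      rw [show r.1 + s - (r'.1 + s) = r.1 - r'.1 by abel,
        show r.2 + t - (r'.2 + t) = r.2 - r'.2 by abel]
      exact hAmax.1 r hr r' hr'
  have hBA : B = A := hAmax.2 B hBmono Set.subset_union_left
  have hmem : ((p.1 + s, p.2 + t) : (H₀ × H₁) × (H₀ × H₁)) ∈ B :=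
    Set.mem_union_right _ ⟨p, hp, rfl⟩
  rw [hBA] at hmem
  exact hmem

end AuxiliaryLemmas

/-- For a maximal monotone restriction `A` of the block operator, a pair
`(u,v) ∈ D(G) × D(D)` lies in the domain of `A` iff the pair of its boundary parts
`(P_{BD(G)}u, P_{BD(D)}v)` does. -/
theorem bd_domain_projection {H₀ H₁ : Type*}
    [NormedAddCommGroup H₀] [InnerProductSpace ℂ H₀] [CompleteSpace H₀]
    [NormedAddCommGroup H₁] [InnerProductSpace ℂ H₁] [CompleteSpace H₁]
    (Gc : H₀ →ₗ.[ℂ] H₁) (Dc : H₁ →ₗ.[ℂ] H₀)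
    (hGc_dense : Dense (Gc.domain : Set H₀)) (hDc_dense : Dense (Dc.domain : Set H₁))
    (hGc_closed : Gc.IsClosed) (hDc_closed : Dc.IsClosed)
    (hle : Gc ≤ -Dc.adjoint)
    (G : H₀ →ₗ.[ℂ] H₁) (D : H₁ →ₗ.[ℂ] H₀)
    (hG : G = -Dc.adjoint) (hD : D = -Gc.adjoint)
    (A : Set ((H₀ × H₁) × (H₀ × H₁))) (hA : A ⊆ blockRel G D)
    (hAmax : MaximalMonotoneRelWRT ipProd A)
    (u uc ub : G.domain) (v vc vb : D.domain)
    (huc : (uc : H₀) ∈ Gc.domain) (hub : ub ∈ BD Gc G) (hu : u = uc + ub)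
    (hvc : (vc : H₁) ∈ Dc.domain) (hvb : vb ∈ BD Dc D) (hv : v = vc + vb) :
    (∃ q, (((u : H₀), (v : H₁)), q) ∈ A) ↔
      (∃ q, (((ub : H₀), (vb : H₁)), q) ∈ A) := by
  subst hG hD
  have hcu := congrArg (Subtype.val) hu
  have hcv := congrArg (Subtype.val) hv
  simp only [Submodule.coe_add] at hcu hcv
  constructor
  · rintro ⟨q, hq⟩
    have h := add_core_mem Gc Dc hGc_dense hDc_dense hle A hA hAmax
      (-(⟨(uc : H₀), huc⟩ : Gc.domain)) (-(⟨(vc : H₁), hvc⟩ : Dc.domain))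
      (((u : H₀), (v : H₁)), q) hq
    have h1 : (u : H₀) + ((-(⟨(uc : H₀), huc⟩ : Gc.domain) : Gc.domain) : H₀)
        = (ub : H₀) := by
      simp only [NegMemClass.coe_neg]
      rw [hcu]; abel
    have h2 : (v : H₁) + ((-(⟨(vc : H₁), hvc⟩ : Dc.domain) : Dc.domain) : H₁)
        = (vb : H₁) := by
      simp only [NegMemClass.coe_neg]
      rw [hcv]; abel
    rw [show ((((u : H₀), (v : H₁)), q).1.1 : H₀) = (u : H₀) from rfl] at h
    simp only [h1, h2] at h
    exact ⟨_, h⟩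
  · rintro ⟨q, hq⟩
    have h := add_core_mem Gc Dc hGc_dense hDc_dense hle A hA hAmax
      (⟨(uc : H₀), huc⟩ : Gc.domain) (⟨(vc : H₁), hvc⟩ : Dc.domain)
      (((ub : H₀), (vb : H₁)), q) hq
    have h1 : (ub : H₀) + (((⟨(uc : H₀), huc⟩ : Gc.domain)) : H₀) = (u : H₀) := by
      rw [hcu]; simp; abel
    have h2 : (vb : H₁) + (((⟨(vc : H₁), hvc⟩ : Dc.domain)) : H₁) = (v : H₁) := by
      rw [hcv]; simp; abel
    simp only [h1, h2] at h
    exact ⟨_, h⟩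
end

section
/- Let V ∈ ℂⁿˣⁿ satisfy V*V ≤ 1 and let S ∈ ℂⁿˣⁿ be selfadjoint and strictly positive definite. Then the matrix −S(1+V) − (1−V) is injective (equivalently, invertible). -/
open Matrix
open scoped ComplexOrder

/-- If `V*V ≤ 1` and `S` is selfadjoint and strictly positive definite, then
`−S(1+V) − (1−V)` is injective. -/
theorem neg_S_one_add_V_injective {n : ℕ} (V S : Matrix (Fin n) (Fin n) ℂ)
    (hV : (1 - Vᴴ * V).PosSemidef) (hS : S.PosDef) :
    Function.Injective (-(S * (1 + V)) - (1 - V)).mulVec := by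
  have key : ∀ x, (-(S * (1 + V)) - (1 - V)).mulVec x = 0 → x = 0 := by
    intro x hx
    set u : Fin n → ℂ := x + V.mulVec x with hu
    set w : Fin n → ℂ := x - V.mulVec x with hw
    have hSu : S.mulVec u = -w := by
      have h := hx
      simp only [Matrix.sub_mulVec, Matrix.neg_mulVec, Matrix.add_mulVec,
        Matrix.one_mulVec, ← Matrix.mulVec_mulVec, sub_eq_zero,
        Matrix.mulVec_add] at h
      rw [hu, hw, Matrix.mulVec_add]
      rw [neg_eq_iff_eq_neg] at h
      exact h
    set c : ℂ := star u ⬝ᵥ S.mulVec u with hc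
    have h1 : 0 ≤ c := hS.posSemidef.dotProduct_mulVec_nonneg u
    have h2 : c = -(star u ⬝ᵥ w) := by rw [hc, hSu, dotProduct_neg]
    have hcreal : star c = c := by
      rw [Complex.nonneg_iff] at h1
      exact Complex.conj_eq_iff_im.2 h1.2.symm
    set p : ℂ := star x ⬝ᵥ ((1 - Vᴴ * V).mulVec x) with hp
    have h3 : 0 ≤ p := hV.dotProduct_mulVec_nonneg x
    have hVV : star (V.mulVec x) ⬝ᵥ (V.mulVec x) = star x ⬝ᵥ ((Vᴴ * V).mulVec x) := by
      rw [Matrix.star_mulVec, ← Matrix.dotProduct_mulVec, Matrix.mulVec_mulVec]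
    have h4 : c + star c = -(2 * p) := by
      have hsc : star c = -(star w ⬝ᵥ u) := by
        rw [h2, star_neg, Matrix.star_dotProduct, star_star]
      rw [hsc, h2, hp, hu, hw]
      simp only [Matrix.sub_mulVec, Matrix.one_mulVec, star_add, star_sub,
        dotProduct_sub, dotProduct_add, add_dotProduct,
        sub_dotProduct, ← hVV]
      ring
    have hc0 : c = 0 := by
      rw [hcreal] at h4
      have : c = -p := by linear_combination h4 / 2
      have hple : -p ≤ 0 := neg_nonpos_of_nonneg h3
      exact le_antisymm (this ▸ hple) h1
    have hu0 : u = 0 := by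
      by_contra h
      exact (hS.dotProduct_mulVec_pos h).ne' hc0
    have hw0 : w = 0 := by
      have := hSu
      rw [hu0, Matrix.mulVec_zero, eq_comm, neg_eq_zero] at this
      exact this
    have : (2 : ℂ) • x = 0 := by
      have := congrArg₂ (· + ·) hu0 hw0
      simp only [hu, hw] at this
      have h2x : x + V.mulVec x + (x - V.mulVec x) = (2 : ℂ) • x := by
        funext i; simp [Pi.smul_apply]; ring
      rw [h2x] at this; simpa using this
    have h2ne : (2 : ℂ) ≠ 0 := two_ne_zero
    exact (smul_eq_zero.1 this).resolve_left h2ne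
  intro a b hab
  have : (-(S * (1 + V)) - (1 - V)).mulVec (a - b) = 0 := by
    rw [Matrix.mulVec_sub, hab, sub_self]
  exact sub_eq_zero.1 (key _ this)
end
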